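/- arXiv:1703.10602 — 9 statements merged into one kernel-verified Lean document; each statement's English description precedes it below -/
import Mathlib

section
/- For any natural number n, the matrix N(n) indexed by the divisors of n, whose (d₁,d₂)-entry is gcd(d₁,d₂), has determinant equal to the product of Euler's totient φ(d) over all divisors d of n. In particular N(n) is invertible. -/
open Matrix Finset

/-- The GCD matrix indexed by divisors of `n` has determinant `∏ φ(d)`,
and in particular is invertible (over `ℚ`). -/
theorem gcd_matrix_det (n : ℕ) (hn : 0 < n) :
    (Matrix.of (fun d₁ d₂ : {d // d ∈ n.divisors} => (Nat.gcd d₁ d₂ : ℚ))).det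
        = ∏ d ∈ n.divisors, (Nat.totient d : ℚ) ∧
    IsUnit (Matrix.of (fun d₁ d₂ : {d // d ∈ n.divisors} => (Nat.gcd d₁ d₂ : ℚ))) := by
  set ι := {d // d ∈ n.divisors}
  set A : Matrix ι ι ℚ := Matrix.of (fun d e : ι => if (e : ℕ) ∣ (d : ℕ) then 1 else 0) with hA
  set Dg : Matrix ι ι ℚ := Matrix.diagonal (fun e : ι => (Nat.totient e : ℚ)) with hD
  have hfact : (Matrix.of (fun d₁ d₂ : ι => (Nat.gcd d₁ d₂ : ℚ))) = A * Dg * Aᵀ := by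
    ext d₁ d₂
    symm
    rw [Matrix.mul_apply]
    simp only [Matrix.mul_diagonal, hA, hD, Matrix.of_apply, Matrix.transpose_apply]
    have hsum : ∀ e : ι, (if (e : ℕ) ∣ (d₁ : ℕ) then (1:ℚ) else 0) *
        (Nat.totient (e : ℕ) : ℚ) * (if (e : ℕ) ∣ (d₂ : ℕ) then (1:ℚ) else 0)
        = (if (e : ℕ) ∣ (d₁ : ℕ) ∧ (e : ℕ) ∣ (d₂ : ℕ)
            then (Nat.totient (e : ℕ) : ℚ) else 0) := by
      intro e
      by_cases h1 : (e : ℕ) ∣ (d₁ : ℕ) <;> by_cases h2 : (e : ℕ) ∣ (d₂ : ℕ) <;>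
        simp only [h1, h2, if_true, if_false, and_self, and_false, false_and,
          one_mul, mul_one, zero_mul, mul_zero, true_and, and_true, if_pos, if_neg,
          not_false_iff]
    simp only [hsum]
    have hgd : Nat.gcd (d₁ : ℕ) (d₂ : ℕ) ∣ n :=
      dvd_trans (Nat.gcd_dvd_left _ _) (Nat.dvd_of_mem_divisors d₁.2)
    have hgpos : 0 < Nat.gcd (d₁ : ℕ) (d₂ : ℕ) :=
      Nat.gcd_pos_of_pos_left _ (Nat.pos_of_mem_divisors d₁.2)
    calc (∑ e : ι, if (e : ℕ) ∣ (d₁ : ℕ) ∧ (e : ℕ) ∣ (d₂ : ℕ)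
            then (Nat.totient (e : ℕ) : ℚ) else 0)
        = ∑ e ∈ n.divisors, (if e ∣ (d₁ : ℕ) ∧ e ∣ (d₂ : ℕ)
            then (Nat.totient e : ℚ) else 0) := by
          exact Finset.sum_coe_sort n.divisors
            (fun e => if e ∣ (d₁ : ℕ) ∧ e ∣ (d₂ : ℕ) then (Nat.totient e : ℚ) else 0)
      _ = ∑ e ∈ n.divisors.filter (· ∣ Nat.gcd (d₁ : ℕ) (d₂ : ℕ)),
            (Nat.totient e : ℚ) := by
          rw [Finset.sum_filter]
          apply Finset.sum_congr rfl
          intro e _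
          simp [Nat.dvd_gcd_iff]
      _ = ∑ e ∈ (Nat.gcd (d₁ : ℕ) (d₂ : ℕ)).divisors, (Nat.totient e : ℚ) := by
          rw [Nat.divisors_filter_dvd_of_dvd hn.ne' hgd]
      _ = (Nat.gcd (d₁ : ℕ) (d₂ : ℕ) : ℚ) := by
          rw [← Nat.cast_sum]
          exact_mod_cast congrArg (Nat.cast (R := ℚ)) (Nat.sum_totient _)
  have hAdet : A.det = 1 := by
    rw [Matrix.det_of_lowerTriangular A]
    · simp [hA]
    · intro i j hij
      have hij' : (i : ℕ) < (j : ℕ) := hij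
      simp only [hA, Matrix.of_apply, ite_eq_right_iff]
      intro hdvd
      exact absurd hij' (Nat.le_of_dvd (Nat.pos_of_mem_divisors i.2) hdvd).not_gt
  have hdet : (Matrix.of (fun d₁ d₂ : ι => (Nat.gcd d₁ d₂ : ℚ))).det
      = ∏ d ∈ n.divisors, (Nat.totient d : ℚ) := by
    rw [hfact, Matrix.det_mul, Matrix.det_mul, Matrix.det_transpose, hAdet,
      Matrix.det_diagonal]
    rw [one_mul, mul_one]
    exact Finset.prod_coe_sort n.divisors (fun d => (Nat.totient d : ℚ))
  refine ⟨hdet, ?_⟩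
  rw [Matrix.isUnit_iff_isUnit_det, hdet, isUnit_iff_ne_zero]
  apply Finset.prod_ne_zero_iff.mpr
  intro d hd
  exact_mod_cast (Nat.totient_pos.mpr (Nat.pos_of_mem_divisors hd)).ne'
end

section
/- For any natural number n and any divisor s of n, the matrix M(n,s), indexed by the divisors of n that do not divide s, with (d₁,d₂)-entry gcd(d₁,d₂) − gcd(d₁,d₂,s), has determinant equal to the product of φ(d) over all divisors d of n not dividing s; in particular it has full rank. -/
open Finset Matrix

/-- Key arithmetic identity: for `0 < g`,
`g - gcd g s = ∑ φ(e)` over divisors `e` of `g` not dividing `s` (in ℚ). -/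
lemma gcd_sub_gcd_eq_sum (g s : ℕ) (hg : 0 < g) :
    (g : ℚ) - (Nat.gcd g s : ℚ) =
      ∑ e ∈ g.divisors.filter (fun e => ¬ e ∣ s), (Nat.totient e : ℚ) := by
  have h1 : (g : ℚ) = ∑ e ∈ g.divisors, (Nat.totient e : ℚ) := by
    rw [← Nat.cast_sum]
    exact_mod_cast (congrArg (Nat.cast : ℕ → ℚ) (Nat.sum_totient g)).symm
  have hdvd : (Nat.gcd g s).divisors = g.divisors.filter (fun e => e ∣ s) := by
    ext e
    simp only [Nat.mem_divisors, Finset.mem_filter, Nat.dvd_gcd_iff]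
    constructor
    · rintro ⟨⟨h1, h2⟩, _⟩; exact ⟨⟨h1, hg.ne'⟩, h2⟩
    · rintro ⟨⟨h1, _⟩, h2⟩
      exact ⟨⟨h1, h2⟩, Nat.gcd_ne_zero_left hg.ne'⟩
  have h2 : (Nat.gcd g s : ℚ) = ∑ e ∈ g.divisors.filter (fun e => e ∣ s),
      (Nat.totient e : ℚ) := by
    rw [← hdvd, ← Nat.cast_sum]
    exact_mod_cast (congrArg (Nat.cast : ℕ → ℚ) (Nat.sum_totient (Nat.gcd g s))).symm
  rw [h1, h2, ← Finset.sum_filter_add_sum_filter_not g.divisors (fun e => e ∣ s)]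
  ring

/-- The matrix `M(n,s)` indexed by divisors of `n` not dividing `s`, with entries
`gcd(d₁,d₂) − gcd(d₁,d₂,s)`, has determinant `∏ φ(d)` over those divisors, and in
particular has full rank. -/
theorem M_matrix_det (n s : ℕ) (hn : 0 < n) (hs : s ∣ n) :
    (Matrix.of (fun d₁ d₂ : {d // d ∈ n.divisors.filter (fun d => ¬ d ∣ s)} =>
        ((Nat.gcd d₁ d₂ : ℚ) - (Nat.gcd (Nat.gcd d₁ d₂) s : ℚ)))).det
        = ∏ d ∈ n.divisors.filter (fun d => ¬ d ∣ s), (Nat.totient d : ℚ) ∧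
    IsUnit (Matrix.of (fun d₁ d₂ : {d // d ∈ n.divisors.filter (fun d => ¬ d ∣ s)} =>
        ((Nat.gcd d₁ d₂ : ℚ) - (Nat.gcd (Nat.gcd d₁ d₂) s : ℚ)))) := by
  classical
  set t := n.divisors.filter (fun d => ¬ d ∣ s) with ht
  have hmem : ∀ d : {d // d ∈ t}, (d : ℕ) ∣ n ∧ 0 < (d : ℕ) ∧ ¬ (d : ℕ) ∣ s := by
    intro d
    have h := Finset.mem_filter.mp d.2
    have h1 := (Nat.mem_divisors.mp h.1).1
    exact ⟨h1, Nat.pos_of_dvd_of_pos h1 hn, h.2⟩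
  -- the 0-1 divisibility matrix
  set A : Matrix {d // d ∈ t} {d // d ∈ t} ℚ :=
    Matrix.of (fun d e => if (e : ℕ) ∣ (d : ℕ) then (1 : ℚ) else 0) with hA
  set D : Matrix {d // d ∈ t} {d // d ∈ t} ℚ :=
    Matrix.diagonal (fun e => (Nat.totient (e : ℕ) : ℚ)) with hD
  have key : (Matrix.of (fun d₁ d₂ : {d // d ∈ t} =>
        ((Nat.gcd d₁ d₂ : ℚ) - (Nat.gcd (Nat.gcd d₁ d₂) s : ℚ)))) = A * D * Aᵀ := by
    ext d₁ d₂
    rw [Matrix.mul_apply]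
    have : ∀ e : {d // d ∈ t}, (A * D) d₁ e * Aᵀ e d₂ =
        (if (e : ℕ) ∣ Nat.gcd d₁ d₂ then (Nat.totient (e : ℕ) : ℚ) else 0) := by
      intro e
      rw [Matrix.mul_diagonal]
      simp only [hA, Matrix.transpose_apply, Matrix.of_apply, Nat.dvd_gcd_iff]
      by_cases h1 : (e : ℕ) ∣ (d₁ : ℕ) <;> by_cases h2 : (e : ℕ) ∣ (d₂ : ℕ) <;>
        simp [h1, h2]
    rw [Finset.sum_congr rfl (fun e _ => this e)]
    have hg : 0 < Nat.gcd (d₁ : ℕ) (d₂ : ℕ) :=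
      Nat.gcd_pos_of_pos_left _ (hmem d₁).2.1
    rw [Matrix.of_apply, gcd_sub_gcd_eq_sum _ s hg]
    rw [Finset.sum_coe_sort t (fun e => if e ∣ Nat.gcd (d₁:ℕ) (d₂:ℕ) then (Nat.totient e : ℚ) else 0)]
    rw [← Finset.sum_filter]
    congr 1
    ext e
    simp only [ht, Finset.mem_filter, Nat.mem_divisors]
    constructor
    · rintro ⟨⟨heg, _⟩, hes⟩
      exact ⟨⟨⟨heg.trans ((Nat.gcd_dvd_left _ _).trans (hmem d₁).1), hn.ne'⟩, hes⟩, heg⟩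
    · rintro ⟨⟨_, hes⟩, heg⟩
      exact ⟨⟨heg, hg.ne'⟩, hes⟩
  have hAdet : A.det = 1 := by
    rw [Matrix.det_of_lowerTriangular A]
    · simp [hA]
    · intro i j hij
      simp only [hA, Matrix.of_apply, ite_eq_right_iff]
      intro hdvd
      exact absurd (Nat.le_of_dvd (hmem i).2.1 hdvd)
        (not_le.mpr (by exact_mod_cast hij))
  have hdet : (Matrix.of (fun d₁ d₂ : {d // d ∈ t} =>
        ((Nat.gcd d₁ d₂ : ℚ) - (Nat.gcd (Nat.gcd d₁ d₂) s : ℚ)))).det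
        = ∏ d ∈ t, (Nat.totient d : ℚ) := by
    rw [key, Matrix.det_mul, Matrix.det_mul, Matrix.det_transpose, hAdet,
      Matrix.det_diagonal, one_mul, mul_one]
    exact Finset.prod_coe_sort t (fun e => (Nat.totient e : ℚ))
  refine ⟨hdet, ?_⟩
  rw [Matrix.isUnit_iff_isUnit_det, hdet, isUnit_iff_ne_zero]
  rw [Finset.prod_ne_zero_iff]
  intro d hd
  rw [ht, Finset.mem_filter, Nat.mem_divisors] at hd
  have : 0 < Nat.totient d := Nat.totient_pos.mpr (Nat.pos_of_dvd_of_pos hd.1.1 hn)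
  exact_mod_cast this.ne'
end

section
/- A finite group K is cyclic if and only if, for every prime ℓ, every ℓ-hypo-elementary subgroup of K is cyclic. -/
/-- A group is `ℓ`-hypo-elementary if it has a normal Sylow `ℓ`-subgroup
(i.e. a normal `ℓ`-subgroup of index coprime to `ℓ`) with cyclic quotient. -/
def IsHypoElementary (ℓ : ℕ) (K : Type*) [Group K] : Prop :=
  ∃ P : Subgroup K, ∃ h : P.Normal,
    IsPGroup ℓ P ∧ ¬ (ℓ ∣ P.index) ∧
      letI : Group (K ⧸ P) := @QuotientGroup.Quotient.group K _ P h
      IsCyclic (K ⧸ P)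

open Subgroup

section Aux

variable {G : Type*} [Group G]

/-- Hypo-elementarity transfers along group isomorphisms. -/
lemma IsHypoElementary.of_mulEquiv {ℓ : ℕ} {G₂ : Type*} [Group G₂] (e : G ≃* G₂)
    (h : IsHypoElementary ℓ G) : IsHypoElementary ℓ G₂ := by
  obtain ⟨P, hN, hP, hidx, hcyc⟩ := h
  haveI := hN
  refine ⟨P.map (e : G →* G₂), hN.map (e : G →* G₂) e.surjective, hP.map _, ?_, ?_⟩
  · have hker : ((e : G →* G₂)).ker ≤ P :=
      le_trans (le_of_eq ((MonoidHom.ker_eq_bot_iff _).2 e.injective)) bot_le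
    rwa [Subgroup.index_map_eq P e.surjective hker]
  · haveI : (P.map (e : G →* G₂)).Normal := hN.map (e : G →* G₂) e.surjective
    exact isCyclic_of_surjective (QuotientGroup.congr P _ e rfl)
      (QuotientGroup.congr P _ e rfl).surjective

/-- The hypothesis of the main theorem passes to subgroups. -/
lemma hyp_subgroup
    (hK : ∀ ℓ : ℕ, ℓ.Prime → ∀ H : Subgroup G, IsHypoElementary ℓ H → IsCyclic H)
    (M : Subgroup G) :
    ∀ ℓ : ℕ, ℓ.Prime → ∀ H : Subgroup M, IsHypoElementary ℓ H → IsCyclic H := by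
  intro ℓ hℓ H hH
  have e : H ≃* (H.map M.subtype) := H.equivMapOfInjective M.subtype M.subtype_injective
  have := hK ℓ hℓ (H.map M.subtype) (hH.of_mulEquiv e)
  exact isCyclic_of_surjective e.symm e.symm.surjective

/-- If `x` normalizes the `ℓ`-subgroup `P` and `ℓ` does not divide the order of `x`,
then `P ⊔ ⟨x⟩` is `ℓ`-hypo-elementary. -/
lemma isHypoElementary_sup_zpowers [Finite G] {ℓ : ℕ} (hℓ : ℓ.Prime)
    {P : Subgroup G} (hP : IsPGroup ℓ P) {x : G} (hx : x ∈ normalizer (P : Set G))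
    (hord : ¬ ℓ ∣ orderOf x) : IsHypoElementary ℓ (P ⊔ zpowers x : Subgroup G) := by
  set H : Subgroup G := P ⊔ zpowers x with hHdef
  have hHle : H ≤ normalizer (P : Set G) := sup_le le_normalizer (zpowers_le.2 hx)
  have hPH : P ≤ H := le_sup_left
  -- every element of H has the form p * x ^ n
  have hrepr : ∀ h ∈ H, ∃ p ∈ P, ∃ n : ℤ, h = p * x ^ n := by
    have hgen : H = Subgroup.closure ((P : Set G) ∪ {x}) := by
      rw [Subgroup.closure_union, Subgroup.closure_eq, ← Subgroup.zpowers_eq_closure]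
    intro h hh
    rw [hgen] at hh
    induction hh using Subgroup.closure_induction with
    | mem g hg =>
      rcases hg with hg | hg
      · exact ⟨g, hg, 0, by simp⟩
      · exact ⟨1, P.one_mem, 1, by simp [Set.mem_singleton_iff.1 hg]⟩
    | one => exact ⟨1, P.one_mem, 0, by simp⟩
    | mul a b _ _ iha ihb =>
      obtain ⟨p₁, hp₁, n₁, rfl⟩ := iha
      obtain ⟨p₂, hp₂, n₂, rfl⟩ := ihb
      refine ⟨p₁ * (x ^ n₁ * p₂ * (x ^ n₁)⁻¹), ?_, n₁ + n₂, by group⟩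
      have hxn : x ^ n₁ ∈ normalizer (P : Set G) := zpow_mem hx n₁
      exact P.mul_mem hp₁ ((Subgroup.mem_normalizer_iff.1 hxn p₂).1 hp₂)
    | inv a _ iha =>
      obtain ⟨p, hp, n, rfl⟩ := iha
      refine ⟨(x ^ n)⁻¹ * p⁻¹ * x ^ n, ?_, -n, by group⟩
      have hxn : (x ^ n)⁻¹ ∈ normalizer (P : Set G) := inv_mem (zpow_mem hx n)
      simpa using (Subgroup.mem_normalizer_iff.1 hxn p⁻¹).1 (P.inv_mem hp)
  set xH : H := ⟨x, mem_sup_right (mem_zpowers x)⟩ with hxH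
  set P₀ : Subgroup H := P.subgroupOf H with hP₀
  have hnormal : P₀.Normal := by
    refine (Subgroup.normal_subgroupOf_iff hPH).2 ?_
    intro p k hp hk
    exact (Subgroup.mem_normalizer_iff.1 (hHle hk) p).1 hp
  -- every element of the quotient is a power of the class of x
  have hquot : ∀ y : H ⧸ P₀, y ∈ zpowers ((QuotientGroup.mk' P₀) xH) := by
    intro y
    obtain ⟨⟨h, hh⟩, rfl⟩ := QuotientGroup.mk'_surjective P₀ y
    obtain ⟨p, hp, n, rfl⟩ := hrepr h hh
    have hxpow : (⟨p * x ^ n, hh⟩ : H) = ⟨p, hPH hp⟩ * xH ^ n := by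
      ext; simp [hxH]
    rw [hxpow, map_mul, map_zpow]
    have h1 : (QuotientGroup.mk' P₀) ⟨p, hPH hp⟩ = 1 := by
      rw [QuotientGroup.mk'_apply, QuotientGroup.eq_one_iff]
      exact Subgroup.mem_subgroupOf.2 hp
    rw [h1, one_mul]
    exact zpow_mem (mem_zpowers _) n
  have hcyc : IsCyclic (H ⧸ P₀) := ⟨⟨_, hquot⟩⟩
  have hidx : ¬ ℓ ∣ P₀.index := by
    intro hdvd
    rw [Subgroup.index_eq_card] at hdvd
    rw [← orderOf_eq_card_of_forall_mem_zpowers hquot] at hdvd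
    have h2 : orderOf ((QuotientGroup.mk' P₀) xH) ∣ orderOf x := by
      have := orderOf_map_dvd (QuotientGroup.mk' P₀) xH
      rwa [show orderOf xH = orderOf x from
        (orderOf_injective H.subtype Subtype.coe_injective xH).symm] at this
    exact hord (hdvd.trans h2)
  refine ⟨P₀, hnormal, ?_, hidx, hcyc⟩
  exact hP.of_equiv (Subgroup.subgroupOfEquivOfLe hPH).symm

/-- Key consequence of the hypothesis: an element of order coprime to `ℓ`
normalizing an `ℓ`-subgroup centralizes it. -/
lemma commute_of_normalizer [Finite G]
    (hG : ∀ ℓ : ℕ, ℓ.Prime → ∀ H : Subgroup G, IsHypoElementary ℓ H → IsCyclic H)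
    {ℓ : ℕ} (hℓ : ℓ.Prime) {P : Subgroup G} (hP : IsPGroup ℓ P) {x : G}
    (hx : x ∈ normalizer (P : Set G)) (hord : ¬ ℓ ∣ orderOf x) :
    ∀ p ∈ P, Commute x p := by
  have hcyc := hG ℓ hℓ _ (isHypoElementary_sup_zpowers hℓ hP hx hord)
  intro p hp
  letI := hcyc.commGroup
  have hxm : x ∈ (P ⊔ zpowers x : Subgroup G) := mem_sup_right (mem_zpowers x)
  have hpm : p ∈ (P ⊔ zpowers x : Subgroup G) := mem_sup_left hp
  have : (⟨x, hxm⟩ : (P ⊔ zpowers x : Subgroup G)) * ⟨p, hpm⟩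
      = ⟨p, hpm⟩ * ⟨x, hxm⟩ := mul_comm _ _
  exact congrArg Subtype.val this

/-- Bezout decomposition of an element of order `a * b` with `a`, `b` coprime. -/
lemma exists_decomp (g : G) {a b : ℕ} (hab : Nat.Coprime a b) (hg : g ^ (a * b) = 1) :
    ∃ y z : G, y ∈ zpowers g ∧ z ∈ zpowers g ∧ g = y * z ∧ y ^ a = 1 ∧ z ^ b = 1 := by
  obtain ⟨u, v, huv⟩ := Nat.isCoprime_iff_coprime.2 hab
  have hgz : g ^ ((a : ℤ) * b) = 1 := by
    rw [← zpow_natCast g (a * b)] at hg; push_cast at hg ⊢; exact hg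
  refine ⟨g ^ ((b : ℤ) * v), g ^ ((a : ℤ) * u), zpow_mem (mem_zpowers g) _,
    zpow_mem (mem_zpowers g) _, ?_, ?_, ?_⟩
  · rw [← zpow_add]
    have : (b : ℤ) * v + a * u = 1 := by linarith
    rw [this, zpow_one]
  · rw [← zpow_natCast, ← zpow_mul]
    have : (b : ℤ) * v * a = a * b * v := by ring
    rw [this, zpow_mul, hgz, one_zpow]
  · rw [← zpow_natCast, ← zpow_mul]
    have : (a : ℤ) * u * b = a * b * u := by ring
    rw [this, zpow_mul, hgz, one_zpow]

/-- If an element of `zpowers g` has order dividing `ℓ ^ k`, then `zpowers` of it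
is an `ℓ`-group. -/
lemma isPGroup_zpowers_of_pow_eq_one {ℓ k : ℕ} (hℓ : ℓ.Prime) {y : G}
    (hy : y ^ ℓ ^ k = 1) : IsPGroup ℓ (zpowers y) := by
  intro ⟨w, hw⟩
  refine ⟨k, ?_⟩
  obtain ⟨m, rfl⟩ := mem_zpowers_iff.1 hw
  have : (y ^ m) ^ (ℓ ^ k : ℕ) = 1 := by
    rw [← zpow_natCast, ← zpow_mul, mul_comm, zpow_mul, zpow_natCast, hy, one_zpow]
  exact Subtype.ext (by simpa using this)

/-- Key lemma for the final gluing: if `x` conjugates `c` into `zpowers c` and the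
orders of `x` and `c` are coprime, then `x` and `c` commute. -/
lemma commute_of_conj_mem [Finite G]
    (hG : ∀ ℓ : ℕ, ℓ.Prime → ∀ H : Subgroup G, IsHypoElementary ℓ H → IsCyclic H) :
    ∀ (m : ℕ) (x c : G), orderOf c = m → x * c * x⁻¹ ∈ zpowers c →
      Nat.Coprime (orderOf x) (orderOf c) → Commute x c := by
  intro m
  induction m using Nat.strong_induction_on with
  | _ m ih =>
  intro x c hm hconj hcop
  rcases eq_or_ne (orderOf c) 1 with h1 | h1
  · rw [orderOf_eq_one_iff.1 h1]; exact Commute.one_right x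
  have hc0 : orderOf c ≠ 0 := (orderOf_pos c).ne'
  obtain ⟨s, hs⟩ := mem_zpowers_iff.1 hconj
  -- conjugation by x sends any power of c to its s-th power
  have key : ∀ t : ℤ, x * c ^ t * x⁻¹ = (c ^ t) ^ s := by
    intro t
    rw [← conj_zpow, ← hs, ← zpow_mul, ← zpow_mul, mul_comm s t]
  set q := (orderOf c).minFac with hqdef
  have hq : q.Prime := Nat.minFac_prime h1
  have hqdvd : q ∣ orderOf c := Nat.minFac_dvd _
  set k := (orderOf c).factorization q with hk
  have hab : Nat.Coprime (q ^ k) (ordCompl[q] (orderOf c)) :=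
    Nat.Coprime.pow_left _ (Nat.coprime_ordCompl hq hc0)
  have hco : c ^ (q ^ k * ordCompl[q] (orderOf c)) = 1 := by
    rw [Nat.ordProj_mul_ordCompl_eq_self]; exact pow_orderOf_eq_one c
  obtain ⟨y, z, hyz, hzz, hcyz, hya, hzb⟩ := exists_decomp c hab hco
  -- x commutes with y (the q-part of c)
  have hxy : Commute x y := by
    have hPy : IsPGroup q (zpowers y) := isPGroup_zpowers_of_pow_eq_one hq hya
    obtain ⟨ty, hty⟩ := mem_zpowers_iff.1 hyz
    have hconjy : x * y * x⁻¹ = y ^ s := by rw [← hty, key]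
    have hsemi : SemiconjBy x y (y ^ s) := by
      unfold SemiconjBy
      rw [← hconjy]; group
    have hordeq : orderOf (y ^ s) = orderOf y := (SemiconjBy.orderOf_eq x hsemi).symm
    have hzeq : zpowers (y ^ s) = zpowers y :=
      Subgroup.eq_of_le_of_card_ge (zpowers_le.2 (zpow_mem (mem_zpowers y) s))
        (by simp [Nat.card_zpowers, hordeq])
    have hxnorm : x ∈ normalizer ((zpowers y : Subgroup G) : Set G) := by
      have hmap : (zpowers y).map (MulAut.conj x).toMonoidHom = zpowers y := by
        rw [MonoidHom.map_zpowers]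
        have h' : (MulAut.conj x).toMonoidHom y = y ^ s := by
          simp only [MulEquiv.coe_toMonoidHom, MulAut.conj_apply]; exact hconjy
        rw [h', hzeq]
      rw [Subgroup.mem_normalizer_iff]
      intro g
      have h'' : x * g * x⁻¹ = (MulAut.conj x).toMonoidHom g := by
        simp [MulAut.conj_apply]
      rw [h'']
      nth_rewrite 2 [← hmap]
      exact (Subgroup.mem_map_iff_mem (by exact fun a b hab => (MulAut.conj x).injective hab)).symm
    have hordx : ¬ q ∣ orderOf x := fun hdvd =>
      hq.ne_one (Nat.dvd_one.1 (hcop ▸ Nat.dvd_gcd hdvd hqdvd))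
    exact commute_of_normalizer hG hq hPy hxnorm hordx y (mem_zpowers y)
  -- x commutes with z (the q'-part of c) by induction
  have hxz : Commute x z := by
    have hzord : orderOf z ∣ ordCompl[q] (orderOf c) := orderOf_dvd_of_pow_eq_one hzb
    have hk1 : (orderOf c).factorization q ≠ 0 :=
      (hq.factorization_pos_of_dvd hc0 hqdvd).ne'
    have hblt : ordCompl[q] (orderOf c) < orderOf c :=
      Nat.div_lt_self (Nat.pos_of_ne_zero hc0) (Nat.one_lt_pow hk1 hq.one_lt)
    have hzlt : orderOf z < m := by
      have hzpos : 0 < orderOf z := orderOf_pos z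
      have hble : orderOf z ≤ ordCompl[q] (orderOf c) :=
        Nat.le_of_dvd (Nat.ordCompl_pos q hc0) hzord
      omega
    obtain ⟨tz, htz⟩ := mem_zpowers_iff.1 hzz
    have hconjz : x * z * x⁻¹ ∈ zpowers z := by
      rw [← htz, key]
      exact zpow_mem (mem_zpowers _) s
    have hcopz : Nat.Coprime (orderOf x) (orderOf z) := by
      have : orderOf z ∣ orderOf c := hzord.trans (Nat.ordCompl_dvd _ _)
      exact Nat.Coprime.coprime_dvd_right this hcop
    exact ih (orderOf z) hzlt x z rfl hconjz hcopz
  rw [hcyz]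
  exact hxy.mul_right hxz

end Aux

/-- Main induction: a finite group all of whose hypo-elementary subgroups are
cyclic is cyclic. -/
lemma isCyclic_of_hyp : ∀ (n : ℕ) (G : Type*) [Group G] [Finite G], Nat.card G = n →
    (∀ ℓ : ℕ, ℓ.Prime → ∀ H : Subgroup G, IsHypoElementary ℓ H → IsCyclic H) →
    IsCyclic G := by
  intro n
  induction n using Nat.strong_induction_on with
  | _ n ih =>
  intro G _ _ hn hG
  rcases eq_or_ne (Nat.card G) 1 with h1 | h1
  · haveI : Subsingleton G := (Nat.card_eq_one_iff_unique.1 h1).1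
    infer_instance
  have hcard0 : Nat.card G ≠ 0 := Nat.card_pos.ne'
  set p := (Nat.card G).minFac with hpdef
  have hp : p.Prime := Nat.minFac_prime h1
  haveI : Fact p.Prime := ⟨hp⟩
  have hpdvd : p ∣ Nat.card G := Nat.minFac_dvd _
  obtain ⟨P⟩ : Nonempty (Sylow p G) := inferInstance
  -- The Sylow p-subgroup is hypo-elementary, hence cyclic
  have hPhypo : IsHypoElementary p (P : Subgroup G) := by
    refine ⟨⊤, inferInstance, ?_, ?_, ?_⟩
    · exact P.2.of_equiv Subgroup.topEquiv.symm
    · rw [Subgroup.index_top]; exact hp.one_lt.ne' ∘ Nat.dvd_one.1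
    · haveI : Subsingleton ((P : Subgroup G) ⧸ (⊤ : Subgroup (P : Subgroup G))) :=
        QuotientGroup.subsingleton_quotient_top
      infer_instance
  have hPcyc : IsCyclic (P : Subgroup G) := hG p hp _ hPhypo
  -- N(P) ≤ C(P)
  have hNC : normalizer ((P : Subgroup G) : Set G) ≤ Subgroup.centralizer (P : Set G) := by
    intro g hg
    have hg0 : orderOf g ≠ 0 := (orderOf_pos g).ne'
    set a := p ^ (orderOf g).factorization p with ha
    set b := ordCompl[p] (orderOf g) with hb
    have hab : Nat.Coprime a b := Nat.Coprime.pow_left _ (Nat.coprime_ordCompl hp hg0)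
    have hgab : g ^ (a * b) = 1 := by
      rw [ha, hb, Nat.ordProj_mul_ordCompl_eq_self]; exact pow_orderOf_eq_one g
    obtain ⟨y, z, hyg, hzg, hgyz, hya, hzb⟩ := exists_decomp g hab hgab
    have hnorm_le : zpowers g ≤ normalizer ((P : Subgroup G) : Set G) := zpowers_le.2 hg
    -- z centralizes P
    have hz : ∀ q ∈ (P : Subgroup G), Commute z q := by
      refine commute_of_normalizer hG hp P.2 (hnorm_le hzg) ?_
      intro hdvd
      exact Nat.not_dvd_ordCompl hp hg0 (hdvd.trans (orderOf_dvd_of_pow_eq_one hzb))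
    -- y is in P
    have hyP : y ∈ (P : Subgroup G) := by
      have hPy : IsPGroup p (zpowers y) := isPGroup_zpowers_of_pow_eq_one hp hya
      have hsup : IsPGroup p ((P : Subgroup G) ⊔ zpowers y : Subgroup G) :=
        P.2.to_sup_of_normal_left' hPy (zpowers_le.2 (hnorm_le hyg))
      have heq := P.3 hsup le_sup_left
      exact heq ▸ (le_sup_right : zpowers y ≤ (P : Subgroup G) ⊔ zpowers y) (mem_zpowers y)
    -- y centralizes P since P is cyclic (hence abelian)
    have hy : ∀ q ∈ (P : Subgroup G), Commute y q := by
      intro q hq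
      letI := hPcyc.commGroup
      have : (⟨y, hyP⟩ : (P : Subgroup G)) * ⟨q, hq⟩ = ⟨q, hq⟩ * ⟨y, hyP⟩ := mul_comm _ _
      exact congrArg Subtype.val this
    rw [Subgroup.mem_centralizer_iff]
    intro q hq
    have : Commute g q := hgyz ▸ (hy q hq).mul_left (hz q hq)
    exact this.symm
  -- Burnside's normal p-complement theorem
  haveI : (P : Subgroup G).FiniteIndex := Subgroup.finiteIndex_of_finite_quotient
  set K₀ : Subgroup G := (MonoidHom.transferSylow P hNC).ker with hK₀def
  have hcompl : Subgroup.IsComplement' K₀ (P : Subgroup G) :=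
    MonoidHom.ker_transferSylow_isComplement' P hNC
  have hndvd : ¬ p ∣ Nat.card K₀ := MonoidHom.not_dvd_card_ker_transferSylow P hNC
  have hcardmul : Nat.card K₀ * Nat.card (P : Subgroup G) = Nat.card G := hcompl.card_mul
  have hPcard : Nat.card (P : Subgroup G) = p ^ (Nat.card G).factorization p :=
    P.card_eq_multiplicity
  have hPbig : 1 < Nat.card (P : Subgroup G) := by
    rw [hPcard]
    exact Nat.one_lt_pow (hp.factorization_pos_of_dvd hcard0 hpdvd).ne' hp.one_lt
  have hK₀lt : Nat.card K₀ < n := by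
    have h0 : 0 < Nat.card K₀ := Nat.card_pos
    calc Nat.card K₀ < Nat.card K₀ * Nat.card (P : Subgroup G) := by
          exact lt_mul_of_one_lt_right h0 hPbig
      _ = n := by rw [hcardmul, hn]
  have hK₀cyc : IsCyclic K₀ := ih (Nat.card K₀) hK₀lt K₀ rfl (hyp_subgroup hG K₀)
  -- pick generators
  obtain ⟨ξ, hξ⟩ := hPcyc.exists_generator
  obtain ⟨γ, hγ⟩ := hK₀cyc.exists_generator
  set x : G := (ξ : G) with hxdef
  set c : G := (γ : G) with hcdef
  have hordx : orderOf x = Nat.card (P : Subgroup G) := by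
    rw [hxdef, Subgroup.orderOf_coe]
    exact orderOf_eq_card_of_forall_mem_zpowers hξ
  have hordc : orderOf c = Nat.card K₀ := by
    rw [hcdef, Subgroup.orderOf_coe]
    exact orderOf_eq_card_of_forall_mem_zpowers hγ
  have hK₀le : K₀ ≤ zpowers c := by
    intro w hw
    obtain ⟨t, ht⟩ := mem_zpowers_iff.1 (hγ ⟨w, hw⟩)
    exact mem_zpowers_iff.2 ⟨t, by
      have := congrArg (Subtype.val : K₀ → G) ht
      simpa using this⟩
  haveI : K₀.Normal := MonoidHom.normal_ker _
  have hconj : x * c * x⁻¹ ∈ zpowers c := by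
    refine hK₀le ?_
    exact (‹K₀.Normal›).conj_mem c γ.2 x
  have hcop : Nat.Coprime (orderOf x) (orderOf c) := by
    rw [hordx, hordc, hPcard]
    exact Nat.Coprime.pow_left _ ((Nat.Prime.coprime_iff_not_dvd hp).2 hndvd)
  have hcomm : Commute x c := commute_of_conj_mem hG (orderOf c) x c rfl hconj hcop
  have hord : orderOf (x * c) = Nat.card G := by
    rw [Commute.orderOf_mul_eq_mul_orderOf_of_coprime hcomm hcop, hordx, hordc]
    rw [← hcardmul]; ring
  exact isCyclic_of_orderOf_eq_card (x * c) hord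

/-- A finite group `K` is cyclic iff for every prime `ℓ`, every `ℓ`-hypo-elementary
subgroup of `K` is cyclic. -/
theorem cyclic_iff_hypoElementary_subgroups_cyclic (K : Type*) [Group K] [Finite K] :
    IsCyclic K ↔ ∀ ℓ : ℕ, ℓ.Prime → ∀ H : Subgroup K, IsHypoElementary ℓ H → IsCyclic H := by
  constructor
  · intro hcyc ℓ hℓ H hH
    exact Subgroup.isCyclic H
  · intro hG
    exact isCyclic_of_hyp (Nat.card K) K rfl hG
end

section
/- Let G be a finite group with cyclic Sylow p-subgroups, let P ≤ G have order p^e with e ≥ 2, and let Q be the unique subgroup of P of order p^{e−1}. Then |N_G(P)|/|Z_G(P)| = |N_G(Q)|/|Z_G(Q)|. -/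
open Subgroup
open scoped Pointwise

private theorem aux_card_sup_inf {Γ : Type*} [Group Γ] [Finite Γ] (H K : Subgroup Γ)
    [K.Normal] :
    Nat.card (H ⊔ K : Subgroup Γ) * Nat.card (H ⊓ K : Subgroup Γ)
      = Nat.card H * Nat.card K := by
  have e := QuotientGroup.quotientInfEquivProdNormalQuotient H K
  have h1 : Nat.card H = Nat.card (H ⧸ K.subgroupOf H) * Nat.card (K.subgroupOf H) :=
    Subgroup.card_eq_card_quotient_mul_card_subgroup _
  have h2 : Nat.card (H ⊔ K : Subgroup Γ)
      = Nat.card ((H ⊔ K : Subgroup Γ) ⧸ K.subgroupOf (H ⊔ K)) * Nat.card (K.subgroupOf (H ⊔ K)) :=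
    Subgroup.card_eq_card_quotient_mul_card_subgroup _
  have h3 : Nat.card (K.subgroupOf H) = Nat.card (H ⊓ K : Subgroup Γ) := by
    rw [← inf_subgroupOf_left K H]
    exact Nat.card_congr (subgroupOfEquivOfLe inf_le_left).toEquiv
  have h4 : Nat.card (K.subgroupOf (H ⊔ K)) = Nat.card K :=
    Nat.card_congr (subgroupOfEquivOfLe le_sup_right).toEquiv
  have h5 : Nat.card (H ⧸ K.subgroupOf H)
      = Nat.card ((H ⊔ K : Subgroup Γ) ⧸ K.subgroupOf (H ⊔ K)) := Nat.card_congr e.toEquiv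
  rw [h2, h4, h1, h3, h5]; ring

private theorem aux_cyclic_card_inj {α : Type*} [Group α] [Finite α] [IsCyclic α]
    (H K : Subgroup α) (h : Nat.card H = Nat.card K) : H = K := by
  suffices key : ∀ H K : Subgroup α, Nat.card H = Nat.card K → H ≤ K from
    le_antisymm (key H K h) (key K H h.symm)
  intro H K h
  obtain ⟨g, hg⟩ := IsCyclic.exists_generator (α := α)
  set n := Nat.card α with hn
  have hgord : orderOf g = n := orderOf_eq_card_of_forall_mem_zpowers hg
  set d := Nat.card K with hd
  have hdvd : d ∣ n := Subgroup.card_subgroup_dvd_card K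
  have hd0 : 0 < d := Nat.card_pos
  have hcontained : ∀ x : α, x ^ d = 1 → x ∈ zpowers (g ^ (n / d)) := by
    intro x hx
    obtain ⟨m, hm⟩ := hg x
    have hgmd : g ^ (m * d) = 1 := by
      have hm' : g ^ m = x := hm
      rw [zpow_mul, hm']
      exact_mod_cast hx
    have : (n : ℤ) ∣ m * d := by
      rw [← hgord]
      exact_mod_cast orderOf_dvd_iff_zpow_eq_one.mpr hgmd
    obtain ⟨c, hc⟩ := this
    have hnd : (n : ℤ) = (n / d : ℕ) * d := by
      exact_mod_cast (Nat.div_mul_cancel hdvd).symm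
    have hmc : m = (n / d : ℕ) * c := by
      have hd0' : (d : ℤ) ≠ 0 := by exact_mod_cast hd0.ne'
      have : m * d = ((n / d : ℕ) * c) * d := by rw [hc, hnd]; ring
      exact mul_right_cancel₀ hd0' this
    refine ⟨c, ?_⟩
    have hm' : g ^ m = x := hm
    show (g ^ (n / d)) ^ c = x
    have hnat : (g ^ (n / d) : α) = g ^ ((n / d : ℕ) : ℤ) := (zpow_natCast _ _).symm
    rw [hnat, ← zpow_mul, ← hmc, hm']
  have hKle : K ≤ zpowers (g ^ (n / d)) := by
    intro x hx
    refine hcontained x ?_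
    have : (⟨x, hx⟩ : K) ^ d = 1 := pow_card_eq_one'
    exact_mod_cast congrArg (Subgroup.subtype K) this
  have hcard : Nat.card (zpowers (g ^ (n / d))) = d := by
    rw [Nat.card_zpowers, orderOf_pow, hgord, Nat.gcd_eq_right (Nat.div_dvd_of_dvd hdvd),
      Nat.div_div_self hdvd (Nat.pos_of_ne_zero Nat.card_pos.ne').ne']
  have hKeq : K = zpowers (g ^ (n / d)) :=
    (Subgroup.eq_of_le_of_card_ge hKle (le_of_eq hcard))
  rw [hKeq]
  intro x hx
  refine hcontained x ?_
  have : (⟨x, hx⟩ : H) ^ d = 1 := by rw [← h]; exact pow_card_eq_one'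
  exact_mod_cast congrArg (Subgroup.subtype H) this

private theorem aux_psub_cyclic {G : Type*} [Group G] {p : ℕ} [Fact p.Prime]
    (hcyc : ∀ P : Sylow p G, IsCyclic ↥(P : Subgroup G))
    (H : Subgroup G) (hH : IsPGroup p H) : IsCyclic ↥H := by
  obtain ⟨S, hle⟩ := hH.exists_le_sylow
  have : IsCyclic ↥(S : Subgroup G) := hcyc S
  exact isCyclic_of_surjective _ (Subgroup.subgroupOfEquivOfLe hle).surjective

/-- If `G` has cyclic Sylow `p`-subgroups, `P ≤ G` has order `p^e` with `e ≥ 2` and `Q` is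
its subgroup of order `p^{e-1}`, then `|N_G(P)|/|Z_G(P)| = |N_G(Q)|/|Z_G(Q)|`
(stated multiplicatively). -/
theorem normalizer_centralizer_ratio_step (G : Type*) [Group G] [Finite G] (p : ℕ)
    (hp : p.Prime) (hcyc : ∀ P : Sylow p G, IsCyclic ↥(P : Subgroup G))
    (e : ℕ) (he : 2 ≤ e) (P Q : Subgroup G) (hQP : Q ≤ P)
    (hPcard : Nat.card P = p ^ e) (hQcard : Nat.card Q = p ^ (e - 1)) :
    Nat.card (Subgroup.normalizer (P : Set G)) * Nat.card (Subgroup.centralizer (Q : Set G))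
      = Nat.card (Subgroup.normalizer (Q : Set G)) * Nat.card (Subgroup.centralizer (P : Set G)) := by
  haveI : Fact p.Prime := ⟨hp⟩
  have hPpg : IsPGroup p P := IsPGroup.of_card hPcard
  have hQpg : IsPGroup p Q := IsPGroup.of_card hQcard
  haveI hPcyc : IsCyclic ↥P := aux_psub_cyclic hcyc P hPpg
  -- commutativity inside P
  have hPcomm : ∀ x ∈ P, ∀ y ∈ P, x * y = y * x := by
    letI := hPcyc.commGroup
    intro x hx y hy
    have : (⟨x, hx⟩ : P) * ⟨y, hy⟩ = ⟨y, hy⟩ * ⟨x, hx⟩ := mul_comm _ _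
    exact congrArg Subtype.val this
  have hPCQ : P ≤ centralizer (Q : Set G) := by
    intro x hx
    exact mem_centralizer_iff.mpr fun q hq => hPcomm q (hQP hq) x hx
  have hCPCQ : centralizer (P : Set G) ≤ centralizer (Q : Set G) :=
    centralizer_le (fun y hy => hQP hy)
  have hCPNP : centralizer (P : Set G) ≤ (normalizer (P : Set G)) := by
    intro g hg
    rw [mem_normalizer_iff]
    intro h
    constructor
    · intro hh
      have := (mem_centralizer_iff.mp hg) h hh
      rw [← this, mul_assoc, mul_inv_cancel, mul_one]
      exact hh
    · intro hh
      have heq : g * h * g⁻¹ ∈ P := hh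
      have hcomm := (mem_centralizer_iff.mp hg) _ heq
      have hgh : g * h = g * (g * h * g⁻¹) := by
        rw [← hcomm]; group
      have : h = g * h * g⁻¹ := mul_left_cancel hgh
      rw [this]; exact heq
  have hCQNQ : centralizer (Q : Set G) ≤ (normalizer (Q : Set G)) := by
    intro g hg
    rw [mem_normalizer_iff]
    intro h
    constructor
    · intro hh
      have := (mem_centralizer_iff.mp hg) h hh
      rw [← this, mul_assoc, mul_inv_cancel, mul_one]
      exact hh
    · intro hh
      have heq : g * h * g⁻¹ ∈ Q := hh
      have hcomm := (mem_centralizer_iff.mp hg) _ heq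
      have hgh : g * h = g * (g * h * g⁻¹) := by
        rw [← hcomm]; group
      have : h = g * h * g⁻¹ := mul_left_cancel hgh
      rw [this]; exact heq
  -- uniqueness of subgroups of P of a given order
  have huniq : ∀ R : Subgroup G, R ≤ P → Nat.card R = Nat.card Q → R = Q := by
    intro R hRP hcard
    have h1 : Nat.card (R.subgroupOf P) = Nat.card R :=
      Nat.card_congr (subgroupOfEquivOfLe hRP).toEquiv
    have h2 : Nat.card (Q.subgroupOf P) = Nat.card Q :=
      Nat.card_congr (subgroupOfEquivOfLe hQP).toEquiv
    have heq : R.subgroupOf P = Q.subgroupOf P :=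
      aux_cyclic_card_inj _ _ (by rw [h1, h2, hcard])
    have := congrArg (fun X : Subgroup ↥P => Subgroup.map P.subtype X) heq
    simpa [subgroupOf_map_subtype, inf_of_le_left hRP, inf_of_le_left hQP] using this
  -- N(P) ≤ N(Q)
  have hNPNQ : (normalizer (P : Set G)) ≤ (normalizer (Q : Set G)) := by
    intro g hg
    have hconjP : ∀ h, h ∈ P ↔ g * h * g⁻¹ ∈ P := mem_normalizer_iff.mp hg
    set R := Q.map (MulAut.conj g).toMonoidHom with hR
    have hcardR : Nat.card R = Nat.card Q :=
      (Nat.card_congr (Subgroup.equivMapOfInjective Q _ (MulAut.conj g).injective).toEquiv).symm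
    have hRP : R ≤ P := by
      rintro y ⟨q, hq, rfl⟩
      exact (hconjP q).mp (hQP hq)
    have hRQ : R = Q := huniq R hRP (by rw [hcardR])
    rw [mem_normalizer_iff]
    intro h
    constructor
    · intro hh
      rw [← hRQ]
      exact ⟨h, hh, rfl⟩
    · intro hh
      rw [← hRQ] at hh
      obtain ⟨q, hq, hqe⟩ := hh
      have hqe' : g * q * g⁻¹ = g * h * g⁻¹ := hqe
      have : h = q := by
        have := mul_right_cancel hqe'
        exact (mul_left_cancel this).symm
      rwa [this]
  -- a generator of P
  obtain ⟨⟨x, hxP⟩, hgen⟩ := hPcyc.exists_generator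
  have hPzx : P = zpowers x := by
    apply le_antisymm
    · intro y hy
      obtain ⟨m, hm⟩ := hgen ⟨y, hy⟩
      exact ⟨m, congrArg Subtype.val hm⟩
    · exact zpowers_le.mpr hxP
  have hxord : orderOf x = p ^ e := by
    have := Nat.card_zpowers x
    rw [← hPzx, hPcard] at this
    omega
  have hppos : 0 < p := hp.pos
  have hep : p ^ e = p ^ (e - 1) * p := by
    conv_lhs => rw [show e = (e - 1) + 1 by omega]
    rw [pow_succ]
  -- Q is generated by x^p
  have hxpord : orderOf (x ^ p) = p ^ (e - 1) := by
    rw [orderOf_pow, hxord, Nat.gcd_eq_right (dvd_pow_self p (by omega : e ≠ 0)), hep,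
      Nat.mul_div_cancel _ hppos]
  have hQz : Q = zpowers (x ^ p) := by
    refine (huniq (zpowers (x ^ p)) ?_ ?_).symm
    · refine zpowers_le.mpr ?_
      rw [hPzx]
      exact ⟨(p : ℤ), by simp⟩
    · rw [Nat.card_zpowers, hxpord, hQcard]
  -- every p-element of the normalizer of P centralizes P
  have hpelt : ∀ y ∈ (normalizer (P : Set G)), IsPGroup p (zpowers y) → y ∈ centralizer (P : Set G) := by
    intro y hy hypg
    have hT : IsPGroup p ((zpowers y ⊔ P : Subgroup G)) :=
      IsPGroup.to_sup_of_normal_right' hypg hPpg (zpowers_le.mpr hy)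
    haveI hTcyc : IsCyclic ↥(zpowers y ⊔ P : Subgroup G) := aux_psub_cyclic hcyc _ hT
    have hTcomm : ∀ a ∈ (zpowers y ⊔ P : Subgroup G), ∀ b ∈ (zpowers y ⊔ P : Subgroup G),
        a * b = b * a := by
      letI := hTcyc.commGroup
      intro a ha b hb
      have : (⟨a, ha⟩ : (zpowers y ⊔ P : Subgroup G)) * ⟨b, hb⟩ = ⟨b, hb⟩ * ⟨a, ha⟩ :=
        mul_comm _ _
      exact congrArg Subtype.val this
    refine mem_centralizer_iff.mpr fun h hh => ?_
    exact hTcomm h (le_sup_right (a := zpowers y) hh) y (le_sup_left (b := P) (mem_zpowers y))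
  -- key step A : N(P) ⊓ C(Q) ≤ C(P)
  have hkeyA : (normalizer (P : Set G)) ⊓ centralizer (Q : Set G) ≤ centralizer (P : Set G) := by
    rintro g ⟨hgN, hgC⟩
    -- g x g⁻¹ = x ^ k
    obtain ⟨k, hk⟩ : ∃ k : ℤ, g * x * g⁻¹ = x ^ k := by
      have : g * x * g⁻¹ ∈ P := (mem_normalizer_iff.mp hgN x).mp hxP
      rw [hPzx] at this
      obtain ⟨k, hk⟩ := this
      exact ⟨k, hk.symm⟩
    -- g centralizes x ^ p
    have hxpQ : x ^ p ∈ Q := by rw [hQz]; exact mem_zpowers _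
    have hxpC : g * x ^ p * g⁻¹ = x ^ p := by
      have := mem_centralizer_iff.mp hgC _ hxpQ
      rw [← this]; group
    -- hence p^(e-1) ∣ k - 1
    have hdvd1 : (p : ℤ) ^ (e - 1) ∣ k - 1 := by
      have h1 : (g * x * g⁻¹) ^ (p : ℤ) = x ^ (k * p) := by
        rw [hk, ← zpow_mul, mul_comm]
      have h2 : (g * x * g⁻¹) ^ (p : ℤ) = g * x ^ (p : ℤ) * g⁻¹ := by
        rw [conj_zpow]
      have h3 : x ^ (k * p) = x ^ (p : ℤ) := by
        rw [← h1, h2]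
        rw [show (x : G) ^ (p : ℤ) = x ^ p by exact zpow_natCast x p]
        exact hxpC
      have h4 : x ^ (k * p - p) = 1 := by
        rw [zpow_sub, h3, mul_inv_cancel]
      have h5 : ((p : ℤ) ^ e) ∣ k * p - p := by
        have := orderOf_dvd_iff_zpow_eq_one.mpr h4
        rw [hxord] at this
        exact_mod_cast this
      have h6 : (p : ℤ) ^ e = (p : ℤ) ^ (e - 1) * p := by
        exact_mod_cast congrArg (fun t : ℕ => (t : ℤ)) hep
      rw [h6] at h5
      have h7 : k * p - p = (k - 1) * p := by ring
      rw [h7] at h5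
      have hp0 : (p : ℤ) ≠ 0 := by exact_mod_cast hppos.ne'
      exact (mul_dvd_mul_iff_right hp0).mp h5
    -- k ^ p ≡ 1  mod p ^ e
    have hdvd2 : ((p : ℤ) ^ e) ∣ k ^ p - 1 := by
      have hgeom : (∑ i ∈ Finset.range p, k ^ i) * (k - 1) = k ^ p - 1 := geom_sum_mul k p
      have hpk1 : (p : ℤ) ∣ k - 1 :=
        dvd_trans (dvd_pow_self (p : ℤ) (by omega : e - 1 ≠ 0)) hdvd1
      have hsum : (p : ℤ) ∣ ∑ i ∈ Finset.range p, k ^ i := by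
        have : ∑ i ∈ Finset.range p, k ^ i - (p : ℤ)
            = ∑ i ∈ Finset.range p, (k ^ i - 1) := by
          rw [Finset.sum_sub_distrib]
          simp
        have hdvd : (p : ℤ) ∣ ∑ i ∈ Finset.range p, (k ^ i - 1) := by
          refine Finset.dvd_sum fun i _ => ?_
          have : k - 1 ∣ k ^ i - 1 := by
            simpa using sub_dvd_pow_sub_pow k 1 i
          exact dvd_trans hpk1 this
        have h8 : (p : ℤ) ∣ (∑ i ∈ Finset.range p, k ^ i) - p := by rw [this]; exact hdvd
        have h9 := dvd_add h8 (dvd_refl (p : ℤ))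
        simpa using h9
      rw [← hgeom]
      have h6 : (p : ℤ) ^ e = (p : ℤ) ^ (e - 1) * p := by
        exact_mod_cast congrArg (fun t : ℕ => (t : ℤ)) hep
      rw [h6, mul_comm (∑ i ∈ Finset.range p, k ^ i) (k - 1)]
      exact mul_dvd_mul hdvd1 hsum
    -- conjugation by powers of g
    have hconj : ∀ m : ℕ, g ^ m * x * (g ^ m)⁻¹ = x ^ (k ^ m : ℤ) := by
      intro m
      induction m with
      | zero => simp
      | succ m ih =>
        have hstep : g ^ (m + 1) * x * (g ^ (m + 1))⁻¹
            = g * (g ^ m * x * (g ^ m)⁻¹) * g⁻¹ := by group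
        rw [hstep, ih, ← conj_zpow, hk, ← zpow_mul, pow_succ, mul_comm (k ^ m) k]
    -- g ^ p centralizes P
    have hgpx : g ^ p * x * (g ^ p)⁻¹ = x := by
      rw [hconj p]
      have h1 : x ^ ((k ^ p - 1) : ℤ) = 1 := by
        apply orderOf_dvd_iff_zpow_eq_one.mp
        rw [hxord]
        exact_mod_cast hdvd2
      rw [show (k ^ p : ℤ) = (k ^ p - 1) + 1 by ring, zpow_add, h1, one_mul, zpow_one]
    have hcommgp : Commute (g ^ p) x := by
      show g ^ p * x = x * g ^ p
      calc g ^ p * x = (g ^ p * x * (g ^ p)⁻¹) * g ^ p := by group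
        _ = x * g ^ p := by rw [hgpx]
    have hgpC : g ^ p ∈ centralizer (P : Set G) := by
      rw [mem_centralizer_iff]
      intro h hh
      rw [hPzx] at hh
      obtain ⟨m, rfl⟩ := hh
      exact ((hcommgp.zpow_right m).symm).eq
    -- the p'-part of g centralizes P
    set n0 := orderOf g with hn0
    have hn0pos : 0 < n0 := orderOf_pos g
    set a := n0.factorization p with ha
    set m := n0 / p ^ a with hm
    have hpadvd : p ^ a ∣ n0 := Nat.ordProj_dvd n0 p
    have hmdvd : m ∣ n0 := Nat.div_dvd_of_dvd hpadvd
    have hordgm : orderOf (g ^ m) = p ^ a := by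
      rw [orderOf_pow, ← hn0, Nat.gcd_eq_right hmdvd, hm, Nat.div_div_self hpadvd hn0pos.ne']
    have hpm : ¬ p ∣ m := Nat.not_dvd_ordCompl hp hn0pos.ne'
    have hgmC : g ^ m ∈ centralizer (P : Set G) := by
      refine hpelt (g ^ m) (pow_mem hgN m) ?_
      exact IsPGroup.of_card (by rw [Nat.card_zpowers, hordgm])
    have hcop : Nat.gcd m p = 1 := Nat.coprime_comm.mp (hp.coprime_iff_not_dvd.mpr hpm)
    have hbez : (1 : ℤ) = m * Nat.gcdA m p + p * Nat.gcdB m p := by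
      have hb := Nat.gcd_eq_gcd_ab m p
      rw [hcop] at hb
      exact_mod_cast hb
    have hgdecomp : g = (g ^ m) ^ (Nat.gcdA m p) * (g ^ p) ^ (Nat.gcdB m p) := by
      rw [← zpow_natCast g m, ← zpow_natCast g p, ← zpow_mul, ← zpow_mul, ← zpow_add,
        ← hbez, zpow_one]
    rw [hgdecomp]
    exact mul_mem (zpow_mem hgmC _) (zpow_mem hgpC _)
  have hinf : (normalizer (P : Set G)) ⊓ centralizer (Q : Set G) = centralizer (P : Set G) :=
    le_antisymm hkeyA (le_inf hCPNP hCPCQ)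
  -- key step B : every element of N(Q) factors as c * w with c ∈ C(Q), w ∈ N(P)
  have hkeyB : ∀ n ∈ (normalizer (Q : Set G)),
      ∃ c ∈ centralizer (Q : Set G), ∃ w ∈ (normalizer (P : Set G)), n = c * w := by
    intro n hn
    set C := centralizer (Q : Set G) with hCdef
    set P' := P.map (MulAut.conj n).toMonoidHom with hP'def
    have hP'C : P' ≤ C := by
      rintro y ⟨h, hh, rfl⟩
      rw [hCdef, mem_centralizer_iff]
      intro q hq
      have hq' : n⁻¹ * q * n ∈ Q := by
        have := (mem_normalizer_iff.mp (inv_mem hn) q).mp hq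
        simpa using this
      have hcomm := mem_centralizer_iff.mp (hPCQ hh) _ hq'
      show q * (n * h * n⁻¹) = (n * h * n⁻¹) * q
      have h2 : n * ((n⁻¹ * q * n) * h) * n⁻¹ = n * (h * (n⁻¹ * q * n)) * n⁻¹ := by
        rw [hcomm]
      calc q * (n * h * n⁻¹) = n * ((n⁻¹ * q * n) * h) * n⁻¹ := by group
        _ = n * (h * (n⁻¹ * q * n)) * n⁻¹ := h2
        _ = (n * h * n⁻¹) * q := by group
    have hcardP' : Nat.card P' = p ^ e := by
      rw [← hPcard]
      exact (Nat.card_congr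
        (Subgroup.equivMapOfInjective P _ (MulAut.conj n).injective).toEquiv).symm
    -- Sylow argument inside C
    set A := P.subgroupOf C with hA
    set B := P'.subgroupOf C with hB
    have hcardA : Nat.card A = p ^ e := by
      rw [← hPcard]; exact Nat.card_congr (subgroupOfEquivOfLe hPCQ).toEquiv
    have hcardB : Nat.card B = p ^ e := by
      rw [← hcardP']; exact Nat.card_congr (subgroupOfEquivOfLe hP'C).toEquiv
    obtain ⟨S, hAS⟩ := (IsPGroup.of_card hcardA).exists_le_sylow
    obtain ⟨T, hBT⟩ := (IsPGroup.of_card hcardB).exists_le_sylow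
    obtain ⟨c0, hc0⟩ := MulAction.exists_smul_eq (↥C) T S
    have hc0' : MulAut.conj c0 • (T : Subgroup ↥C) = S := congrArg Sylow.toSubgroup hc0
    set B2 := B.map (MulAut.conj c0).toMonoidHom with hB2
    have hB2S : B2 ≤ S := by
      rintro z ⟨b, hb, rfl⟩
      rw [← hc0']
      exact Subgroup.smul_mem_pointwise_smul b (MulAut.conj c0) _ (hBT hb)
    have hcardB2 : Nat.card B2 = p ^ e := by
      rw [← hcardB]
      exact (Nat.card_congr
        (Subgroup.equivMapOfInjective B _ (MulAut.conj c0).injective).toEquiv).symm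
    -- Sylows of C are cyclic
    haveI hScyc : IsCyclic ↥(S : Subgroup ↥C) := by
      have hmap : IsPGroup p ((S : Subgroup ↥C).map C.subtype) := S.2.map _
      have := aux_psub_cyclic hcyc _ hmap
      exact isCyclic_of_surjective _
        (Subgroup.equivMapOfInjective (S : Subgroup ↥C) C.subtype
          C.subtype_injective).symm.surjective
    have hAB2 : A = B2 := by
      have h1 : Nat.card (A.subgroupOf S) = Nat.card (B2.subgroupOf S) := by
        rw [Nat.card_congr (subgroupOfEquivOfLe hAS).toEquiv,
          Nat.card_congr (subgroupOfEquivOfLe hB2S).toEquiv, hcardA, hcardB2]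
      have h2 := aux_cyclic_card_inj _ _ h1
      have h3 := congrArg (fun X : Subgroup ↥(S : Subgroup ↥C) =>
        Subgroup.map (S : Subgroup ↥C).subtype X) h2
      simpa [subgroupOf_map_subtype, inf_of_le_left hAS, inf_of_le_left hB2S] using h3
    -- translate back: for z ∈ C, z ∈ P ↔ c0⁻¹ z c0 ∈ P'
    have hclaim : ∀ z : ↥C, ((z : G) ∈ P ↔ (↑c0)⁻¹ * (z : G) * ↑c0 ∈ P') := by
      intro z
      have hz : z ∈ A ↔ z ∈ B2 := by rw [hAB2]
      rw [hA, mem_subgroupOf] at hz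
      rw [hB2, Subgroup.mem_map_equiv, hB, mem_subgroupOf] at hz
      have hcoe : (((MulAut.conj c0).symm z : ↥C) : G) = (↑c0)⁻¹ * (z : G) * ↑c0 := by
        simp [MulAut.conj_symm_apply]
      rw [hcoe] at hz
      exact hz
    refine ⟨(↑c0)⁻¹, inv_mem c0.2, ↑c0 * n, ?_, by group⟩
    rw [mem_normalizer_iff]
    intro h
    constructor
    · intro hh
      have hz : (↑c0 * n * h * n⁻¹ * (↑c0)⁻¹ : G) ∈ C := by
        have h2 : (n * h * n⁻¹ : G) ∈ C := hP'C ⟨h, hh, rfl⟩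
        have heq0 : (↑c0 * n * h * n⁻¹ * (↑c0)⁻¹ : G) = ↑c0 * (n * h * n⁻¹) * (↑c0)⁻¹ := by
          group
        rw [heq0]
        exact mul_mem (mul_mem c0.2 h2) (inv_mem c0.2)
      have hmem := (hclaim ⟨_, hz⟩).mpr (by
        show (↑c0)⁻¹ * (↑c0 * n * h * n⁻¹ * (↑c0)⁻¹) * ↑c0 ∈ P'
        have heq1 : (↑c0)⁻¹ * (↑c0 * n * h * n⁻¹ * (↑c0)⁻¹ : G) * ↑c0 = n * h * n⁻¹ := by group
        rw [heq1]
        exact ⟨h, hh, rfl⟩)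
      have heq2 : (↑c0 * n * h * (↑c0 * n)⁻¹ : G) = ↑c0 * n * h * n⁻¹ * (↑c0)⁻¹ := by group
      rw [heq2]
      exact hmem
    · intro hh
      have heq2 : (↑c0 * n * h * (↑c0 * n)⁻¹ : G) = ↑c0 * n * h * n⁻¹ * (↑c0)⁻¹ := by group
      have hh' : (↑c0 * n * h * n⁻¹ * (↑c0)⁻¹ : G) ∈ P := by rw [← heq2]; exact hh
      have hz : (↑c0 * n * h * n⁻¹ * (↑c0)⁻¹ : G) ∈ C := hPCQ hh'
      have h2 := (hclaim ⟨_, hz⟩).mp hh'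
      have h3 : (↑c0)⁻¹ * (↑c0 * n * h * n⁻¹ * (↑c0)⁻¹) * ↑c0 = n * h * n⁻¹ := by group
      rw [h3] at h2
      obtain ⟨h', hh'', heq⟩ := h2
      have : n * h' * n⁻¹ = n * h * n⁻¹ := heq
      have : h = h' := by
        have := mul_right_cancel this
        exact (mul_left_cancel this).symm
      rwa [this]
  -- assembly inside N(Q)
  have hCPNQ : centralizer (P : Set G) ≤ (normalizer (Q : Set G)) := le_trans hCPCQ hCQNQ
  set H := (normalizer (P : Set G)).subgroupOf (normalizer (Q : Set G)) with hH
  set K := (centralizer (Q : Set G)).subgroupOf (normalizer (Q : Set G)) with hK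
  haveI hKnormal : K.Normal := by
    constructor
    intro k hk nn
    rw [hK, mem_subgroupOf] at hk ⊢
    rw [mem_centralizer_iff] at hk ⊢
    intro q hq
    have hq' : (↑nn)⁻¹ * q * ↑nn ∈ Q := by
      have := (mem_normalizer_iff.mp (inv_mem nn.2) q).mp hq
      simpa using this
    have hcomm := hk _ hq'
    show q * ↑(nn * k * nn⁻¹) = ↑(nn * k * nn⁻¹) * q
    have hcoe : (↑(nn * k * nn⁻¹) : G) = ↑nn * ↑k * (↑nn)⁻¹ := by rfl
    rw [hcoe]
    have h2 : ↑nn * (((↑nn)⁻¹ * q * ↑nn) * ↑k) * (↑nn)⁻¹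
        = ↑nn * (↑k * ((↑nn)⁻¹ * q * ↑nn)) * (↑nn)⁻¹ := by rw [hcomm]
    calc q * (↑nn * ↑k * (↑nn)⁻¹) = ↑nn * (((↑nn)⁻¹ * q * ↑nn) * ↑k) * (↑nn)⁻¹ := by group
      _ = ↑nn * (↑k * ((↑nn)⁻¹ * q * ↑nn)) * (↑nn)⁻¹ := h2
      _ = (↑nn * ↑k * (↑nn)⁻¹) * q := by group
  have hHsupK : H ⊔ K = ⊤ := by
    rw [eq_top_iff]
    rintro y -
    obtain ⟨c, hc, w, hw, hy⟩ := hkeyB ↑y y.2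
    have hyy : y = (⟨c, hCQNQ hc⟩ : (normalizer (Q : Set G))) * ⟨w, hNPNQ hw⟩ := Subtype.ext hy
    rw [hyy]
    exact mul_mem (le_sup_right (α := Subgroup ↥(normalizer (Q : Set G))) (mem_subgroupOf.mpr hc))
      (le_sup_left (α := Subgroup ↥(normalizer (Q : Set G))) (mem_subgroupOf.mpr hw))
  have hHinfK : H ⊓ K = (centralizer (P : Set G)).subgroupOf (normalizer (Q : Set G)) := by
    ext z
    rw [mem_inf, hH, hK, mem_subgroupOf, mem_subgroupOf, mem_subgroupOf, ← hinf, mem_inf]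
  have key := aux_card_sup_inf H K
  rw [hHsupK, hHinfK] at key
  have c1 : Nat.card H = Nat.card (normalizer (P : Set G)) :=
    Nat.card_congr (subgroupOfEquivOfLe hNPNQ).toEquiv
  have c2 : Nat.card K = Nat.card (centralizer (Q : Set G)) :=
    Nat.card_congr (subgroupOfEquivOfLe hCQNQ).toEquiv
  have c3 : Nat.card ((centralizer (P : Set G)).subgroupOf (normalizer (Q : Set G)))
      = Nat.card (centralizer (P : Set G)) :=
    Nat.card_congr (subgroupOfEquivOfLe hCPNQ).toEquiv
  have c4 : Nat.card (⊤ : Subgroup ↥(normalizer (Q : Set G))) = Nat.card (normalizer (Q : Set G)) :=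
    Nat.card_congr Subgroup.topEquiv.toEquiv
  rw [c1, c2, c3, c4] at key
  exact key.symm
end

section
/- Let G be a finite group, p a prime, and Q a central subgroup of G of order p. Then the number of elements of G whose order is divisible by p equals the number of elements of G/Q whose order is divisible by p, plus ((p−1)/p)·|G|. -/
/-- If `Q ≤ Z(G)` has order `p`, then `P(G,1) = P(G/Q,1) + (p-1)·|G|/p`
(stated multiplied through by `p`). -/
theorem count_order_div_p_central_step (G : Type*) [Group G] [Finite G] (p : ℕ)
    (hp : p.Prime) (Q : Subgroup G) [hN : Q.Normal]
    (hQZ : Q ≤ Subgroup.center G) (hQcard : Nat.card Q = p) :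
    p * Nat.card {g : G // p ∣ orderOf g}
      = p * Nat.card {x : G ⧸ Q // p ∣ orderOf x} + (p - 1) * Nat.card G := by
  classical
  have hπ : ∀ g : G, orderOf ((g : G ⧸ Q)) ∣ orderOf g := fun g =>
    orderOf_map_dvd (QuotientGroup.mk' Q) g
  -- the map on p'-elements
  set f : {g : G // ¬ p ∣ orderOf g} → {x : G ⧸ Q // ¬ p ∣ orderOf x} :=
    fun g => ⟨(g.1 : G ⧸ Q), fun hd => g.2 (hd.trans (hπ g.1))⟩ with hf
  have hbij : Function.Bijective f := by
    constructor
    · rintro ⟨a, ha⟩ ⟨b, hb⟩ hab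
      have hmk : (a : G ⧸ Q) = (b : G ⧸ Q) := congrArg Subtype.val hab
      have hq : a⁻¹ * b ∈ Q := QuotientGroup.eq.mp hmk
      set q := a⁻¹ * b with hqdef
      by_cases hq1 : q = 1
      · have : a = b := by
          have h := hq1
          rw [hqdef] at h
          exact (inv_mul_eq_one.mp h).symm ▸ rfl
        exact Subtype.ext this
      · exfalso
        have hqp : q ^ p = 1 := by
          have h1 : (⟨q, hq⟩ : Q) ^ p = 1 := by
            rw [← hQcard]; exact pow_card_eq_one'
          have := congrArg (Subtype.val) h1
          simpa using this
        have hordq : orderOf q = p := by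
          have hdvd : orderOf q ∣ p := orderOf_dvd_of_pow_eq_one hqp
          rcases (Nat.Prime.eq_one_or_self_of_dvd hp _ hdvd) with h | h
          · exact absurd (orderOf_eq_one_iff.mp h) hq1
          · exact h
        have hcomm : Commute a q :=
          (Subgroup.mem_center_iff.mp (hQZ hq) a)
        have hcop : (orderOf a).Coprime (orderOf q) := by
          rw [hordq]
          exact (hp.coprime_iff_not_dvd.mpr ha).symm
        have hb' : b = a * q := by rw [hqdef]; group
        have : orderOf b = orderOf a * orderOf q := by
          rw [hb']
          exact hcomm.orderOf_mul_eq_mul_orderOf_of_coprime hcop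
        exact hb ⟨orderOf a, by rw [this, hordq, Nat.mul_comm]⟩
    · rintro ⟨x, hx⟩
      obtain ⟨g, hg⟩ : ∃ g : G, (g : G ⧸ Q) = x := ⟨x.out, QuotientGroup.out_eq' x⟩
      set m := orderOf x with hm
      have hm0 : 0 < m := orderOf_pos x
      have hgm : g ^ m ∈ Q := by
        apply (QuotientGroup.eq_one_iff _).mp
        have : ((g ^ m : G) : G ⧸ Q) = x ^ m := by
          rw [← hg]; rfl
        rw [this, hm, pow_orderOf_eq_one]
      have hgmp : g ^ (m * p) = 1 := by
        have h1 : (⟨g ^ m, hgm⟩ : Q) ^ p = 1 := by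
          rw [← hQcard]; exact pow_card_eq_one'
        have := congrArg Subtype.val h1
        simpa [pow_mul] using this
      have hcop : Nat.Coprime p m := hp.coprime_iff_not_dvd.mpr hx
      obtain ⟨k, hk⟩ : ∃ k, Nat.totient m = k + 1 :=
        ⟨Nat.totient m - 1, (Nat.succ_pred_eq_of_pos (Nat.totient_pos.mpr hm0)).symm⟩
      set e := p ^ Nat.totient m with he
      have htot : e ≡ 1 [MOD m] := Nat.ModEq.pow_totient hcop
      have hh1 : (g ^ e) ^ m = 1 := by
        have harith : e * m = (m * p) * p ^ k := by
          rw [he, hk, pow_succ]; ring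
        rw [← pow_mul, harith, pow_mul, hgmp, one_pow]
      have hordh : ¬ p ∣ orderOf (g ^ e) := fun hd =>
        hx (hd.trans (orderOf_dvd_of_pow_eq_one hh1))
      have hmk : ((g ^ e : G) : G ⧸ Q) = x := by
        have h1 : ((g ^ e : G) : G ⧸ Q) = x ^ e := by rw [← hg]; rfl
        have h2 : x ^ e = x ^ 1 := pow_eq_pow_iff_modEq.mpr (by simpa [hm] using htot)
        rw [h1, h2, pow_one]
      exact ⟨⟨g ^ e, hordh⟩, Subtype.ext hmk⟩
  have hA : Nat.card {g : G // ¬ p ∣ orderOf g}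
      = Nat.card {x : G ⧸ Q // ¬ p ∣ orderOf x} := Nat.card_eq_of_bijective f hbij
  -- now counting
  have : Fintype G := Fintype.ofFinite G
  have : Fintype (G ⧸ Q) := Fintype.ofFinite _
  rw [Nat.card_eq_fintype_card, Nat.card_eq_fintype_card, Nat.card_eq_fintype_card]
  rw [Nat.card_eq_fintype_card, Nat.card_eq_fintype_card] at hA
  have hGQ : Nat.card G = Nat.card (G ⧸ Q) * p := by
    rw [Subgroup.card_eq_card_quotient_mul_card_subgroup Q, hQcard]
  rw [Nat.card_eq_fintype_card, Nat.card_eq_fintype_card] at hGQ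
  set cPG := Fintype.card {g : G // p ∣ orderOf g}
  set cPQ := Fintype.card {x : G ⧸ Q // p ∣ orderOf x}
  set A := Fintype.card {x : G ⧸ Q // ¬ p ∣ orderOf x}
  have h1 : A = Fintype.card G - cPG := by
    rw [← hA]; exact Fintype.card_subtype_compl _
  have h2 : A = Fintype.card (G ⧸ Q) - cPQ := Fintype.card_subtype_compl _
  have h3 : cPG ≤ Fintype.card G := Fintype.card_subtype_le _
  have h4 : cPQ ≤ Fintype.card (G ⧸ Q) := Fintype.card_subtype_le _
  obtain ⟨r, hr⟩ : ∃ r, p = r + 1 :=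
    ⟨p - 1, (Nat.succ_pred_eq_of_pos hp.pos).symm⟩
  set K := r * Fintype.card (G ⧸ Q) with hK
  have hG2 : Fintype.card G = Fintype.card (G ⧸ Q) + K := by
    rw [hGQ, hK, hr]; ring
  have hkey : cPG = cPQ + K := by omega
  have hrp : p - 1 = r := by omega
  rw [hkey, hrp, hGQ, hK]
  ring
end

section
/- Let G be a finite group with cyclic Sylow p-subgroups containing a central subgroup Q of order p^k with k ≥ 2, and let Q̃ ≤ Q be its subgroup of order p. Then the number of elements of G whose order is divisible by p^k equals p times the number of elements of G/Q̃ whose order is divisible by p^{k−1}. -/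
open Subgroup QuotientGroup

/-- In a cyclic finite group, two elements of the same prime order generate the
same subgroup. -/
lemma zpowers_eq_zpowers_of_prime_orderOf {K : Type*} [Group K] [Finite K] [IsCyclic K]
    {p : ℕ} (hp : p.Prime) {x y : K} (hx : orderOf x = p) (hy : orderOf y = p) :
    Subgroup.zpowers x = Subgroup.zpowers y := by
  classical
  have : Fintype K := Fintype.ofFinite K
  have hS := IsCyclic.card_pow_eq_one_le (α := K) (n := p) hp.pos
  have key : ∀ w : K, orderOf w = p →
      (Subgroup.zpowers w : Set K).toFinset = ({a : K | a ^ p = 1} : Finset K) := by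
    intro w hw
    apply Finset.eq_of_subset_of_card_le
    · intro u hu
      simp only [Set.mem_toFinset, SetLike.mem_coe] at hu
      simp only [Finset.mem_filter, Finset.mem_univ, true_and]
      exact orderOf_dvd_iff_pow_eq_one.mp (hw ▸ orderOf_dvd_of_mem_zpowers hu)
    · calc (({a : K | a ^ p = 1} : Finset K)).card ≤ p := hS
        _ = (Subgroup.zpowers w : Set K).toFinset.card := by
            rw [Set.toFinset_card]
            rw [show (Fintype.card ((Subgroup.zpowers w : Set K) : Type _))
                = Nat.card (Subgroup.zpowers w) from
                  (Nat.card_eq_fintype_card).symm, Nat.card_zpowers, hw]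
  have := (key x hx).trans (key y hy).symm
  ext u
  constructor <;> intro hu
  · have : u ∈ (Subgroup.zpowers y : Set K).toFinset := by
      rw [← this]; simpa using hu
    simpa using this
  · have : u ∈ (Subgroup.zpowers x : Set K).toFinset := by
      rw [this]; simpa using hu
    simpa using this


/-- If `G` has cyclic Sylow `p`-subgroups and a central subgroup `Q` of order `p^k`, `k ≥ 2`,
with `Q̃ ≤ Q` of order `p`, then `P(G,k) = p · P(G/Q̃, k-1)`. -/
theorem count_order_div_pk_central_step (G : Type*) [Group G] [Finite G] (p : ℕ)
    (hp : p.Prime) (hcyc : ∀ P : Sylow p G, IsCyclic ↥(P : Subgroup G))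
    (k : ℕ) (hk : 2 ≤ k) (Q Qt : Subgroup G) [hN : Qt.Normal]
    (hQZ : Q ≤ Subgroup.center G) (hQcard : Nat.card Q = p ^ k)
    (hQtQ : Qt ≤ Q) (hQtcard : Nat.card Qt = p) :
    Nat.card {g : G // p ^ k ∣ orderOf g}
      = p * Nat.card {x : G ⧸ Qt // p ^ (k - 1) ∣ orderOf x} := by
  obtain ⟨j, rfl⟩ : ∃ j, k = j + 2 := ⟨k - 2, by omega⟩
  have hj1 : j + 2 - 1 = j + 1 := rfl
  -- a generator of Qt
  have : Nontrivial ↥Qt := Finite.one_lt_card_iff_nontrivial.mp (hQtcard ▸ hp.one_lt)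
  obtain ⟨z0, hz0⟩ := exists_ne (1 : ↥Qt)
  have hz0ord : orderOf z0 = p := by
    have h1 : orderOf z0 ∣ p := hQtcard ▸ orderOf_dvd_natCard z0
    rcases (Nat.Prime.eq_one_or_self_of_dvd hp _ h1) with h | h
    · exact absurd (orderOf_eq_one_iff.mp h) hz0
    · exact h
  set z : G := (z0 : G) with hzdef
  have hzQt : z ∈ Qt := z0.2
  have hzord : orderOf z = p := by rw [hzdef, Subgroup.orderOf_coe]; exact hz0ord
  have hQtz : Qt = Subgroup.zpowers z := by
    refine (Subgroup.eq_of_le_of_card_ge (Subgroup.zpowers_le.mpr hzQt) ?_).symm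
    rw [hQtcard, Nat.card_zpowers, hzord]
  -- every element of Qt has p-th power 1
  have hQtp : ∀ x ∈ Qt, x ^ p = 1 := by
    intro x hx
    have : orderOf x ∣ p := hQtcard ▸ Qt.orderOf_dvd_natCard hx
    exact orderOf_dvd_iff_pow_eq_one.mp this
  -- key equivalence
  have key : ∀ g : G, p ^ (j + 2) ∣ orderOf g ↔
      p ^ (j + 1) ∣ orderOf (QuotientGroup.mk g : G ⧸ Qt) := by
    intro g
    set q := orderOf (QuotientGroup.mk g : G ⧸ Qt) with hq
    have hqdvd : q ∣ orderOf g := orderOf_map_dvd (QuotientGroup.mk' Qt) g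
    have hgq : g ^ q ∈ Qt := by
      rw [← QuotientGroup.eq_one_iff]
      rw [QuotientGroup.mk_pow]  -- maybe wrong name
      exact pow_orderOf_eq_one _
    constructor
    · intro hdvd
      have h1 : orderOf g ∣ q * p := by
        apply orderOf_dvd_of_pow_eq_one
        rw [pow_mul]
        exact hQtp _ hgq
      have h2 : p ^ (j + 1) * p ∣ q * p := by
        rw [← pow_succ]
        exact dvd_trans hdvd h1
      exact (Nat.mul_dvd_mul_iff_right hp.pos).mp h2
    · intro hdvd
      by_contra hndvd
      have hdvd' : p ^ (j + 1) ∣ orderOf g := dvd_trans hdvd hqdvd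
      obtain ⟨m, hm⟩ := hdvd'
      have hpm : ¬ p ∣ m := by
        intro ⟨c, hc⟩
        exact hndvd ⟨c, by rw [hm, hc]; ring⟩
      have hm0 : m ≠ 0 := by
        intro h0
        rw [h0, mul_zero] at hm
        exact (orderOf_pos g).ne' hm
      -- the p-part of g
      set a : G := g ^ m with hadef
      have haord : orderOf a = p ^ (j + 1) := by
        rw [hadef, orderOf_pow, hm]
        rw [Nat.gcd_eq_right (dvd_mul_left m _)]
        exact Nat.mul_div_cancel _ (Nat.pos_of_ne_zero hm0)
      have hapgrp : IsPGroup p (Subgroup.zpowers a) :=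
        IsPGroup.of_card (by rw [Nat.card_zpowers, haord])
      obtain ⟨P, hPa⟩ := hapgrp.exists_le_sylow
      have hQP : Q ≤ (P : Subgroup G) := by
        have h1 : Q ≤ Subgroup.normalizer (P : Set G) :=
          le_trans hQZ (Subgroup.center_le_normalizer _)
        have h2 := (IsPGroup.of_card (n := j + 2) hQcard).inf_normalizer_sylow P
        rw [inf_eq_left.mpr h1] at h2
        rw [h2]
        exact inf_le_right
      haveI := hcyc P
      have haP : a ∈ (P : Subgroup G) := hPa (Subgroup.mem_zpowers a)
      have hzP : z ∈ (P : Subgroup G) := hQP (hQtQ hzQt)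
      set a' : ↥(P : Subgroup G) := ⟨a, haP⟩ with ha'
      set z' : ↥(P : Subgroup G) := ⟨z, hzP⟩ with hz'
      have haord' : orderOf a' = p ^ (j + 1) := by rw [orderOf_mk]; exact haord
      have hzord' : orderOf z' = p := by rw [orderOf_mk]; exact hzord
      set b' : ↥(P : Subgroup G) := a' ^ (p ^ j) with hb'
      have hbord : orderOf b' = p := by
        rw [hb', orderOf_pow, haord']
        rw [Nat.gcd_eq_right (pow_dvd_pow p (Nat.le_succ j))]
        rw [pow_succ]
        exact Nat.mul_div_cancel_left _ (pow_pos hp.pos j)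
      have hzb : Subgroup.zpowers z' = Subgroup.zpowers b' :=
        zpowers_eq_zpowers_of_prime_orderOf hp hzord' hbord
      -- hence b' ∈ Qt, i.e. g ^ (m * p ^ j) ∈ Qt
      have hbQt : (b' : G) ∈ Qt := by
        have : b' ∈ Subgroup.zpowers z' := hzb ▸ Subgroup.mem_zpowers b'
        obtain ⟨i, hi⟩ := this
        rw [hQtz]
        exact ⟨i, by rw [← hi]; push_cast [hz']; rfl⟩
      have hgb : g ^ (p ^ j * m) ∈ Qt := by
        have : (b' : G) = g ^ (p ^ j * m) := by
          rw [hb', ha']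
          push_cast
          rw [← pow_mul, mul_comm]
        rwa [← this]
      have hqd2 : q ∣ p ^ j * m := by
        apply orderOf_dvd_of_pow_eq_one
        rw [← QuotientGroup.mk_pow, QuotientGroup.eq_one_iff]
        exact hgb
      have : p ^ (j + 1) ∣ p ^ j * m := dvd_trans hdvd hqd2
      rw [pow_succ] at this
      exact hpm ((Nat.mul_dvd_mul_iff_left (pow_pos hp.pos j)).mp this)
  -- counting
  rw [hj1]
  have e1 : {g : G // p ^ (j + 2) ∣ orderOf g} ≃
      {g : G // p ^ (j + 1) ∣ orderOf (QuotientGroup.mk g : G ⧸ Qt)} :=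
    Equiv.subtypeEquivRight key
  rw [Nat.card_congr e1]
  have e2 := QuotientGroup.preimageMkEquivSubgroupProdSet Qt
    {x : G ⧸ Qt | p ^ (j + 1) ∣ orderOf x}
  have h3 : Nat.card {g : G // p ^ (j + 1) ∣ orderOf (QuotientGroup.mk g : G ⧸ Qt)}
      = Nat.card (↥Qt × {x : G ⧸ Qt // p ^ (j + 1) ∣ orderOf x}) := Nat.card_congr e2
  rw [h3, Nat.card_prod, hQtcard]
end

section
/- Let G be a finite group with non-cyclic Sylow p-subgroups of order p^d. Then (1/|G|)·Σ_{g∈G} v_p(|g|) + P(G,1)/(|G|·(p−1)) < d, where P(G,1) is the number of elements of G of order divisible by p. -/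
lemma isCyclic_zpowers {G : Type*} [Group G] (h : G) :
    IsCyclic ↥(Subgroup.zpowers h) := by
  refine ⟨⟨⟨h, Subgroup.mem_zpowers h⟩, ?_⟩⟩
  rintro ⟨x, k, rfl⟩
  exact ⟨k, by ext; simp⟩

/-- If `G` has non-cyclic Sylow `p`-subgroups of order `p^d`, then
`(1/|G|)·Σ_g v_p(|g|) + P(G,1)/(|G|(p−1)) < d`. -/
theorem avg_padic_val_lt (G : Type*) [Group G] [Fintype G] (p : ℕ) (hp : p.Prime)
    (d : ℕ) (hd : d = (Nat.card G).factorization p)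
    (hnc : ∀ P : Sylow p G, ¬ IsCyclic ↥(P : Subgroup G)) :
    (∑ g : G, ((orderOf g).factorization p : ℚ)) / (Nat.card G : ℚ)
      + (Nat.card {g : G // p ∣ orderOf g} : ℚ) / ((Nat.card G : ℚ) * ((p : ℚ) - 1))
      < (d : ℚ) := by
  have hp' : Fact p.Prime := ⟨hp⟩
  have hn0 : 0 < Nat.card G := Nat.card_pos
  -- no element has order divisible by p ^ d
  have key : ∀ g : G, ¬ p ^ d ∣ orderOf g := by
    intro g hdvd
    have hg0 : orderOf g ≠ 0 := (orderOf_pos g).ne'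
    have hord : orderOf (g ^ (orderOf g / p ^ d)) = p ^ d :=
      orderOf_pow_orderOf_div hg0 hdvd
    have hcard : Nat.card (Subgroup.zpowers (g ^ (orderOf g / p ^ d)))
        = p ^ (Nat.card G).factorization p := by
      rw [Nat.card_zpowers, hord, hd]
    exact hnc (Sylow.ofCard _ hcard) (isCyclic_zpowers _)
  -- each p-adic valuation is < d
  have hflt : ∀ g : G, (orderOf g).factorization p < d := by
    intro g
    by_contra hle
    push_neg at hle
    exact key g ((Nat.Prime.pow_dvd_iff_le_factorization hp (orderOf_pos g).ne').mpr hle)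
  -- the sum bound
  have hsum : (∑ g : G, ((orderOf g).factorization p : ℚ))
      ≤ (Nat.card G : ℚ) * ((d : ℚ) - 1) := by
    calc (∑ g : G, ((orderOf g).factorization p : ℚ))
        ≤ ∑ _g : G, ((d : ℚ) - 1) := by
          apply Finset.sum_le_sum
          intro g _
          have h1 : (orderOf g).factorization p + 1 ≤ d := hflt g
          have h2 : ((orderOf g).factorization p : ℚ) + 1 ≤ (d : ℚ) := by
            exact_mod_cast h1
          linarith
      _ = (Nat.card G : ℚ) * ((d : ℚ) - 1) := by
          rw [Finset.sum_const, Finset.card_univ, nsmul_eq_mul, Nat.card_eq_fintype_card]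
  -- count bound
  have hPlt : Nat.card {g : G // p ∣ orderOf g} < Nat.card G := by
    refine Finite.card_subtype_lt (x := (1 : G)) ?_
    simp only [orderOf_one, Nat.dvd_one]
    exact hp.one_lt.ne'
  have hnQ : (0 : ℚ) < (Nat.card G : ℚ) := by exact_mod_cast hn0
  have hq1 : (1 : ℚ) ≤ (p : ℚ) - 1 := by
    have := hp.two_le
    have : (2 : ℚ) ≤ (p : ℚ) := by exact_mod_cast this
    linarith
  have hq0 : (0 : ℚ) < (Nat.card G : ℚ) * ((p : ℚ) - 1) := by nlinarith
  have hPQ : (Nat.card {g : G // p ∣ orderOf g} : ℚ) < (Nat.card G : ℚ) := by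
    exact_mod_cast hPlt
  have h1 : (∑ g : G, ((orderOf g).factorization p : ℚ)) / (Nat.card G : ℚ)
      ≤ (d : ℚ) - 1 := by
    rw [div_le_iff₀ hnQ]
    linarith
  have h2 : (Nat.card {g : G // p ∣ orderOf g} : ℚ)
      / ((Nat.card G : ℚ) * ((p : ℚ) - 1)) < 1 := by
    rw [div_lt_one hq0]
    nlinarith
  linarith
end

section
/- Let G be a finite group, p a prime, k ≥ 1, and suppose G has cyclic Sylow p-subgroups. Fix a subgroup Q ≤ G isomorphic to C_{p^k}. Then the number of elements of G of order divisible by p^k equals the index |G : N_G(Q)| times the number of elements of the centralizer Z_G(Q) of order divisible by p^k. -/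
open Subgroup MulAction Pointwise ConjAct

section Aux
variable {G : Type*} [Group G]

lemma IsCyclic.subgroup_eq_of_card_eq' {H : Type*} [Group H] [Finite H] [IsCyclic H]
    {A B : Subgroup H} (h : Nat.card A = Nat.card B) : A = B := by
  classical
  cases nonempty_fintype H
  have key : ∀ C : Subgroup H, (C : Set H).toFinset
      = Finset.univ.filter (fun x : H => x ^ Nat.card C = 1) := by
    intro C
    have hsub : (C : Set H).toFinset ⊆ Finset.univ.filter (fun x : H => x ^ Nat.card C = 1) := by
      intro x hx
      rw [Set.mem_toFinset] at hx
      simp only [Finset.mem_filter, Finset.mem_univ, true_and]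
      have : ((⟨x, hx⟩ : C) : H) ^ Nat.card C = 1 := by
        rw [← SubmonoidClass.coe_pow, pow_card_eq_one']
        rfl
      simpa using this
    refine Finset.eq_of_subset_of_card_le hsub ?_
    have h1 : (Finset.univ.filter (fun x : H => x ^ Nat.card C = 1)).card ≤ Nat.card C := by
      have := IsCyclic.card_pow_eq_one_le (α := H) (n := Nat.card C) Nat.card_pos
      simpa using this
    have h2 : (C : Set H).toFinset.card = Nat.card C := by
      rw [Set.toFinset_card, Nat.card_eq_fintype_card]
      congr 1
    omega
  apply SetLike.ext'
  rw [← Set.toFinset_inj, key A, key B, h]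

lemma eq_of_le_cyclic [Finite G] {P A B : Subgroup G} (hP : IsCyclic P)
    (hA : A ≤ P) (hB : B ≤ P) (h : Nat.card A = Nat.card B) : A = B := by
  have hAB : A.subgroupOf P = B.subgroupOf P := by
    apply IsCyclic.subgroup_eq_of_card_eq'
    rw [Nat.card_congr (subgroupOfEquivOfLe hA).toEquiv,
      Nat.card_congr (subgroupOfEquivOfLe hB).toEquiv, h]
  have := congrArg (Subgroup.map P.subtype) hAB
  rwa [subgroupOf_map_subtype, subgroupOf_map_subtype, inf_eq_left.mpr hA,
    inf_eq_left.mpr hB] at this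

lemma conjAct_smul_eq (a : G) (S : Subgroup G) :
    toConjAct a • S = MulAut.conj a • S := by
  ext x
  simp only [Subgroup.mem_pointwise_smul_iff_inv_smul_mem, ConjAct.smul_def,
    ConjAct.ofConjAct_inv, ConjAct.ofConjAct_toConjAct, MulAut.smul_def, MulAut.conj_inv_apply,
    inv_inv]

lemma mem_conjAct_smul_iff {a : G} {S : Subgroup G} {x : G} :
    x ∈ toConjAct a • S ↔ a⁻¹ * x * a ∈ S := by
  rw [Subgroup.mem_pointwise_smul_iff_inv_smul_mem, ConjAct.smul_def]
  simp [mul_assoc]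

lemma card_conjAct_smul (a : ConjAct G) (S : Subgroup G) :
    Nat.card (a • S : Subgroup G) = Nat.card S :=
  (Nat.card_congr (Subgroup.equivSMul a S).toEquiv).symm

variable [Finite G] {p k : ℕ}

/-- Any two subgroups of order `p ^ k` are conjugate when the Sylow subgroups are cyclic. -/
lemma conj_of_card_eq (hp : p.Prime) (hcyc : ∀ P : Sylow p G, IsCyclic ↥(P : Subgroup G))
    {Q R : Subgroup G} (hQ : Nat.card Q = p ^ k) (hR : Nat.card R = p ^ k) :
    ∃ a : G, toConjAct a • Q = R := by
  haveI : Fact p.Prime := ⟨hp⟩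
  obtain ⟨P, hQP⟩ := (IsPGroup.of_card hQ).exists_le_sylow
  obtain ⟨P', hRP'⟩ := (IsPGroup.of_card hR).exists_le_sylow
  obtain ⟨g, hg⟩ := MulAction.exists_smul_eq G P' P
  have h1 : MulAut.conj g • R ≤ (P : Subgroup G) := by
    rw [← hg, Sylow.coe_subgroup_smul]
    exact Subgroup.pointwise_smul_le_pointwise_smul_iff.mpr hRP'
  have h2 : MulAut.conj g • R = Q := by
    refine eq_of_le_cyclic (hcyc P) h1 hQP ?_
    rw [hQ, ← hR]
    exact Nat.card_congr (Subgroup.equivSMul (MulAut.conj g) R).toEquiv.symm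
  refine ⟨g⁻¹, ?_⟩
  rw [conjAct_smul_eq, ← h2, map_inv, inv_smul_smul]

/-- Key: if `g` centralizes a subgroup `R` of order `p ^ k` and `p ^ k ∣ orderOf g`,
then the order-`p^k` subgroup of `⟨g⟩` is `R` itself. -/
lemma zpowers_eq_of_mem_centralizer (hp : p.Prime)
    (hcyc : ∀ P : Sylow p G, IsCyclic ↥(P : Subgroup G))
    {R : Subgroup G} (hR : Nat.card R = p ^ k) {g : G} (hg : p ^ k ∣ orderOf g)
    (hc : g ∈ centralizer (R : Set G)) :
    Subgroup.zpowers (g ^ (orderOf g / p ^ k)) = R := by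
  haveI : Fact p.Prime := ⟨hp⟩
  have hord : orderOf g ≠ 0 := (orderOf_pos g).ne'
  set h : G := g ^ (orderOf g / p ^ k) with hh
  have hpk : p ^ k ≠ 0 := pow_ne_zero _ hp.pos.ne'
  have hn : orderOf g / p ^ k ≠ 0 := Nat.div_ne_zero_iff_of_dvd hg |>.mpr ⟨hord, hpk⟩
  have horderh : orderOf h = p ^ k := by
    rw [hh, orderOf_pow' g hn, Nat.gcd_eq_right (Nat.div_dvd_of_dvd hg),
      Nat.div_div_self hg hord]
  have hcardz : Nat.card (Subgroup.zpowers h) = p ^ k := by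
    rw [Nat.card_zpowers, horderh]
  -- both `zpowers h` and `R` lie in a common `p`-subgroup
  set C : Subgroup G := centralizer (R : Set G) with hC
  have hhC : h ∈ C := Subgroup.pow_mem _ hc _
  have hzC : Subgroup.zpowers h ≤ C := by
    rw [Subgroup.zpowers_le]; exact hhC
  have hRcyc : IsCyclic R := by
    obtain ⟨P, hle⟩ := (IsPGroup.of_card hR).exists_le_sylow
    haveI := hcyc P
    exact Subgroup.isCyclic_of_le hle
  have hRC : R ≤ C := by
    haveI : IsMulCommutative R := by
      letI := hRcyc.commGroup
      exact ⟨⟨mul_comm⟩⟩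
    exact Subgroup.le_centralizer R
  set A : Subgroup C := (Subgroup.zpowers h).subgroupOf C with hA
  set B : Subgroup C := R.subgroupOf C with hB
  haveI : B.Normal := by
    constructor
    intro b hb c
    have hbR : (b : G) ∈ R := hb
    have : (c : G) * b * (c : G)⁻¹ = (b : G) := by
      have hcomm := Subgroup.mem_centralizer_iff.mp c.2 (b : G) hbR
      rw [mul_inv_eq_iff_eq_mul]
      exact hcomm.symm
    have : ((c * b * c⁻¹ : C) : G) ∈ R := by
      push_cast
      rw [this]; exact hbR
    exact this
  have hpA : IsPGroup p A :=
    IsPGroup.of_card (by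
      rw [Nat.card_congr (subgroupOfEquivOfLe hzC).toEquiv, hcardz])
  have hpB : IsPGroup p B :=
    IsPGroup.of_card (by
      rw [Nat.card_congr (subgroupOfEquivOfLe hRC).toEquiv, hR])
  have hpS : IsPGroup p ((A ⊔ B : Subgroup C)) := IsPGroup.to_sup_of_normal_right hpA hpB
  have hpS' : IsPGroup p ((A ⊔ B : Subgroup C).map C.subtype) := hpS.map _
  obtain ⟨P, hSP⟩ := hpS'.exists_le_sylow
  have hzP : Subgroup.zpowers h ≤ (P : Subgroup G) := by
    refine le_trans ?_ hSP
    have : A.map C.subtype ≤ (A ⊔ B : Subgroup C).map C.subtype :=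
      Subgroup.map_mono le_sup_left
    rwa [hA, subgroupOf_map_subtype, inf_eq_left.mpr hzC] at this
  have hRP : R ≤ (P : Subgroup G) := by
    refine le_trans ?_ hSP
    have : B.map C.subtype ≤ (A ⊔ B : Subgroup C).map C.subtype :=
      Subgroup.map_mono le_sup_right
    rwa [hB, subgroupOf_map_subtype, inf_eq_left.mpr hRC] at this
  exact eq_of_le_cyclic (hcyc P) hzP hRP (by rw [hcardz, hR])

lemma mem_centralizer_iff_zpowers_eq (hp : p.Prime)
    (hcyc : ∀ P : Sylow p G, IsCyclic ↥(P : Subgroup G))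
    {R : Subgroup G} (hR : Nat.card R = p ^ k) {g : G} (hg : p ^ k ∣ orderOf g) :
    g ∈ centralizer (R : Set G) ↔ Subgroup.zpowers (g ^ (orderOf g / p ^ k)) = R := by
  constructor
  · exact zpowers_eq_of_mem_centralizer hp hcyc hR hg
  · rintro rfl
    rw [Subgroup.mem_centralizer_iff]
    rintro y ⟨m, rfl⟩
    exact (((Commute.refl g).pow_right _).zpow_right m).symm.eq

lemma stabilizer_conjAct_eq (Q : Subgroup G) :
    stabilizer (ConjAct G) Q
      = (Subgroup.normalizer (Q : Set G)).comap (ConjAct.ofConjAct : ConjAct G ≃* G).toMonoidHom := by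
  ext a
  rw [mem_stabilizer_iff, Subgroup.mem_comap]
  have key : ∀ x : G, x ∈ a • Q ↔ (ofConjAct a)⁻¹ * x * ofConjAct a ∈ Q := by
    intro x
    rw [Subgroup.mem_pointwise_smul_iff_inv_smul_mem, ConjAct.smul_def, ConjAct.ofConjAct_inv,
      inv_inv]
  show a • Q = Q ↔ ofConjAct a ∈ Subgroup.normalizer (Q : Set G)
  rw [← inv_mem_iff (H := Subgroup.normalizer (Q : Set G)), Subgroup.mem_normalizer_iff]
  simp only [inv_inv]
  constructor
  · intro hsmul x
    rw [← key x, hsmul]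
  · intro hn
    ext x
    rw [key x]
    exact (hn x).symm

end Aux

section Main

variable {G : Type*} [Group G] [Finite G] {p k : ℕ}

lemma card_zpowers_pow_div (hp : p.Prime) {g : G} (hg : p ^ k ∣ orderOf g) :
    Nat.card (Subgroup.zpowers (g ^ (orderOf g / p ^ k))) = p ^ k := by
  have hord : orderOf g ≠ 0 := (orderOf_pos g).ne'
  have hpk : p ^ k ≠ 0 := pow_ne_zero _ hp.pos.ne'
  have hn : orderOf g / p ^ k ≠ 0 := (Nat.div_ne_zero_iff_of_dvd hg).mpr ⟨hord, hpk⟩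
  rw [Nat.card_zpowers, orderOf_pow' g hn, Nat.gcd_eq_right (Nat.div_dvd_of_dvd hg),
    Nat.div_div_self hg hord]

lemma centralizer_conjAct_smul (a : ConjAct G) (Q : Subgroup G) :
    centralizer ((a • Q : Subgroup G) : Set G) = a • centralizer (Q : Set G) := by
  ext x
  rw [Subgroup.mem_pointwise_smul_iff_inv_smul_mem]
  have hsmul : a⁻¹ • x = (ofConjAct a)⁻¹ * x * ofConjAct a := by
    rw [ConjAct.smul_def, ConjAct.ofConjAct_inv, inv_inv]
  rw [hsmul, Subgroup.mem_centralizer_iff, Subgroup.mem_centralizer_iff]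
  constructor
  · intro hx y hy
    have hmem : ofConjAct a * y * (ofConjAct a)⁻¹ ∈ (a • Q : Subgroup G) := by
      have := Subgroup.smul_mem_pointwise_smul y a Q hy
      rwa [ConjAct.smul_def] at this
    have h1 := hx _ hmem
    have h2 := congrArg (fun z => (ofConjAct a)⁻¹ * z * ofConjAct a) h1
    simp only [mul_assoc, inv_mul_cancel_left, inv_mul_cancel, mul_one] at h2 ⊢
    exact h2
  · intro hx y hy
    have hyQ : (ofConjAct a)⁻¹ * y * ofConjAct a ∈ Q := by
      have h := Subgroup.mem_pointwise_smul_iff_inv_smul_mem.mp hy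
      rwa [ConjAct.smul_def, ConjAct.ofConjAct_inv, inv_inv] at h
    have h1 := hx _ hyQ
    have h2 := congrArg (fun z => ofConjAct a * z * (ofConjAct a)⁻¹) h1
    simp only [mul_assoc, mul_inv_cancel_left, inv_mul_cancel_left, mul_inv_cancel,
      mul_one] at h2 ⊢
    exact h2

theorem count_order_div_pk_via_centralizer' (hp : p.Prime)
    (hcyc : ∀ P : Sylow p G, IsCyclic ↥(P : Subgroup G))
    (Q : Subgroup G) (hQcard : Nat.card Q = p ^ k) :
    Nat.card {g : G // p ^ k ∣ orderOf g}
      = (Subgroup.normalizer (Q : Set G)).index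
          * Nat.card {x : Subgroup.centralizer (Q : Set G) // p ^ k ∣ orderOf x} := by
  classical
  haveI : Fact p.Prime := ⟨hp⟩
  have horb : ∀ R : orbit (ConjAct G) Q, Nat.card ((R : Subgroup G)) = p ^ k := by
    rintro ⟨R, hR⟩
    obtain ⟨a, rfl⟩ := MulAction.mem_orbit_iff.mp hR
    simpa using (card_conjAct_smul a Q).trans hQcard
  set T := {g : G // p ^ k ∣ orderOf g} with hT
  have fmem : ∀ t : T, Subgroup.zpowers ((t : G) ^ (orderOf (t : G) / p ^ k))
      ∈ orbit (ConjAct G) Q := by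
    intro t
    obtain ⟨a, ha⟩ := conj_of_card_eq hp hcyc hQcard (card_zpowers_pow_div hp t.2)
    exact MulAction.mem_orbit_iff.mpr ⟨toConjAct a, ha⟩
  set f : T → orbit (ConjAct G) Q :=
    fun t => ⟨Subgroup.zpowers ((t : G) ^ (orderOf (t : G) / p ^ k)), fmem t⟩ with hf
  have fiber_equiv : ∀ R : orbit (ConjAct G) Q,
      {t : T // f t = R}
        ≃ {x : centralizer (((R : Subgroup G)) : Set G) // p ^ k ∣ orderOf x} := by
    intro R
    refine
      { toFun := fun t => ⟨⟨(t.1 : G), ?_⟩, ?_⟩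
        invFun := fun x => ⟨⟨(x.1 : G), ?_⟩, ?_⟩
        left_inv := ?_
        right_inv := ?_ }
    · exact (mem_centralizer_iff_zpowers_eq hp hcyc (horb R) t.1.2).mpr
        (congrArg Subtype.val t.2)
    · simpa using t.1.2
    · simpa using x.2
    · refine Subtype.ext ?_
      exact (mem_centralizer_iff_zpowers_eq hp hcyc (horb R) (by simpa using x.2)).mp x.1.2
    · intro t; rfl
    · intro x; rfl
  have cent_equiv : ∀ R : orbit (ConjAct G) Q,
      {x : centralizer (((R : Subgroup G)) : Set G) // p ^ k ∣ orderOf x}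
        ≃ {x : centralizer ((Q : Subgroup G) : Set G) // p ^ k ∣ orderOf x} := by
    intro R
    have hR := MulAction.mem_orbit_iff.mp R.2
    set a := Classical.choose hR with ha
    have haQ : a • Q = (R : Subgroup G) := Classical.choose_spec hR
    have e : centralizer ((Q : Subgroup G) : Set G)
        ≃* centralizer (((R : Subgroup G)) : Set G) :=
      (Subgroup.equivSMul a (centralizer (Q : Set G))).trans
        (MulEquiv.subgroupCongr (by rw [← haQ, centralizer_conjAct_smul]))
    exact (Equiv.subtypeEquiv e.toEquiv (fun x => by rw [show orderOf (e.toEquiv x) = orderOf x from e.orderOf_eq x])).symm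
  have e2 : T ≃ orbit (ConjAct G) Q × {x : centralizer ((Q : Subgroup G) : Set G) //
      p ^ k ∣ orderOf x} :=
    (Equiv.sigmaFiberEquiv f).symm.trans
      ((Equiv.sigmaCongrRight (fun R => (fiber_equiv R).trans (cent_equiv R))).trans
        (Equiv.sigmaEquivProd _ _))
  rw [Nat.card_congr e2, Nat.card_prod]
  congr 1
  rw [Nat.card_congr (MulAction.orbitEquivQuotientStabilizer (ConjAct G) Q),
    ← Subgroup.index_eq_card, stabilizer_conjAct_eq,
    Subgroup.index_comap_of_surjective _ (MulEquiv.surjective _)]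

end Main

/-- If `G` has cyclic Sylow `p`-subgroups and `Q ≅ C_{p^k}` (`k ≥ 1`), then
`P(G,k) = |G : N_G(Q)| · P(Z_G(Q), k)`. -/
theorem count_order_div_pk_via_centralizer (G : Type*) [Group G] [Finite G] (p : ℕ)
    (hp : p.Prime) (hcyc : ∀ P : Sylow p G, IsCyclic ↥(P : Subgroup G))
    (k : ℕ) (hk : 1 ≤ k) (Q : Subgroup G) (hQcyc : IsCyclic Q)
    (hQcard : Nat.card Q = p ^ k) :
    Nat.card {g : G // p ^ k ∣ orderOf g}
      = (Subgroup.normalizer (Q : Set G)).index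
          * Nat.card {x : Subgroup.centralizer (Q : Set G) // p ^ k ∣ orderOf x} := by
  exact count_order_div_pk_via_centralizer' hp hcyc Q hQcard
end

section
/- Let G be a finite group, μ_Σ the Möbius function of the lattice of subgroups of G, and define θ_Σ = Σ_{H ≤ G} (μ_Σ(H)/|G:H|)·[G/H] as a rational linear combination of G-sets. Then for any subgroup K ≤ G, the total number of K-fixed points of θ_Σ (i.e. Σ_H (μ_Σ(H)/|G:H|)·#(G/H)^K) equals Σ_{H ≥ K} μ_Σ(H). -/
/-- Fixed-point formula for `θ_Σ = Σ_H (μ_Σ(H)/|G:H|)·[G/H]`: for any `K ≤ G`,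
`Σ_H (μ_Σ(H)/|G:H|)·#(G/H)^K = Σ_{H ≥ K} μ_Σ(H)`. -/
theorem mobius_theta_fixed_points (G : Type*) [Group G] [Finite G]
    (μ : Subgroup G → ℤ) (htop : μ ⊤ = 1)
    (hrec : ∀ H : Subgroup G, H ≠ ⊤ → ∑ᶠ H' : {H' : Subgroup G // H ≤ H'}, μ H'.val = 0)
    (K : Subgroup G) :
    ∑ᶠ H : Subgroup G,
        (μ H : ℚ) / (H.index : ℚ)
          * (Nat.card {x : G ⧸ H // ∀ k ∈ K, k • x = x} : ℚ)
      = ∑ᶠ H : {H : Subgroup G // K ≤ H}, (μ H.val : ℚ) := by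
  classical
  cases nonempty_fintype G
  haveI : Fintype (Subgroup G) := Fintype.ofFinite _
  -- Step 1: the Möbius recursion says the sum over `H ≥ L` is the indicator of `L = ⊤`.
  have key : ∀ L : Subgroup G,
      (∑ᶠ H : {H : Subgroup G // L ≤ H}, (μ H.val : ℚ)) = if L = ⊤ then 1 else 0 := by
    intro L
    by_cases hL : L = ⊤
    · subst hL
      rw [finsum_eq_single _ (⟨⊤, le_rfl⟩ : {H : Subgroup G // (⊤ : Subgroup G) ≤ H})
        (fun b hb => absurd (Subtype.ext (top_le_iff.mp b.2)) hb), if_pos rfl]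
      exact_mod_cast htop
    · rw [if_neg hL]
      have h := hrec L hL
      have hcast := (Int.castAddHom ℚ).map_finsum
        (f := fun H' : {H' : Subgroup G // L ≤ H'} => μ H'.val) (Set.toFinite _)
      rw [h] at hcast
      simpa using hcast.symm
  -- Step 2: same statement as a `Finset` sum over all subgroups with an indicator.
  have key' : ∀ L : Subgroup G,
      (∑ H : Subgroup G, if L ≤ H then (μ H : ℚ) else 0) = if L = ⊤ then 1 else 0 := by
    intro L
    rw [← key L]
    refine Eq.symm ?_
    calc (∑ᶠ H : {H : Subgroup G // L ≤ H}, (μ H.val : ℚ))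
        = ∑ᶠ (H : Subgroup G) (_ : L ≤ H), (μ H : ℚ) :=
          finsum_subtype_eq_finsum_cond (f := fun H : Subgroup G => (μ H : ℚ)) (fun H => L ≤ H)
      _ = ∑ᶠ H : Subgroup G, Set.indicator {H : Subgroup G | L ≤ H} (fun H => (μ H : ℚ)) H :=
          finsum_mem_def _ _
      _ = ∑ H : Subgroup G, Set.indicator {H : Subgroup G | L ≤ H} (fun H => (μ H : ℚ)) H :=
          finsum_eq_sum_of_fintype _
      _ = ∑ H : Subgroup G, if L ≤ H then (μ H : ℚ) else 0 :=
          Finset.sum_congr rfl fun H _ => by simp [Set.indicator_apply]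
  -- Step 2': version with the explicit conjugation condition.
  have key'' : ∀ g : G,
      (∑ H : Subgroup G, if (∀ k ∈ K, g⁻¹ * k * g ∈ H) then (μ H : ℚ) else 0)
        = if K = ⊤ then 1 else 0 := by
    intro g
    set L : Subgroup G := K.map ((MulAut.conj g⁻¹).toMonoidHom) with hLdef
    have h1 : ∀ H : Subgroup G, (∀ k ∈ K, g⁻¹ * k * g ∈ H) ↔ L ≤ H := by
      intro H
      rw [hLdef, Subgroup.map_le_iff_le_comap, SetLike.le_def]
      simp [Subgroup.mem_comap, MulAut.conj_apply, mul_assoc]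
    have h2 : (L = ⊤) ↔ (K = ⊤) := by
      have hinj : Function.Injective (Subgroup.map (MulAut.conj g⁻¹).toMonoidHom) :=
        Subgroup.map_injective (MulAut.conj g⁻¹).injective
      have htm : Subgroup.map (MulAut.conj g⁻¹).toMonoidHom (⊤ : Subgroup G) = ⊤ :=
        Subgroup.map_top_of_surjective _ (MulAut.conj g⁻¹).surjective
      constructor
      · intro h
        exact hinj (by rw [htm, ← hLdef, h])
      · intro h
        rw [hLdef, h, htm]
    calc (∑ H : Subgroup G, if (∀ k ∈ K, g⁻¹ * k * g ∈ H) then (μ H : ℚ) else 0)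
        = ∑ H : Subgroup G, if L ≤ H then (μ H : ℚ) else 0 :=
          Finset.sum_congr rfl fun H _ => if_congr (h1 H) rfl rfl
      _ = if L = ⊤ then 1 else 0 := key' L
      _ = if K = ⊤ then 1 else 0 := by rw [if_congr h2 rfl rfl]
  -- Step 3: counting fixed points.
  have count : ∀ H : Subgroup G,
      (Nat.card {x : G ⧸ H // ∀ k ∈ K, k • x = x} : ℚ) * (Nat.card H : ℚ)
        = ∑ g : G, (if ∀ k ∈ K, g⁻¹ * k * g ∈ H then (1 : ℚ) else 0) := by
    intro H
    have hiff : ∀ g k : G,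
        (k • (QuotientGroup.mk g : G ⧸ H) = QuotientGroup.mk g) ↔ g⁻¹ * k * g ∈ H := by
      intro g k
      rw [show k • (QuotientGroup.mk g : G ⧸ H) = QuotientGroup.mk (k * g) from rfl,
        QuotientGroup.eq]
      have hg : (k * g)⁻¹ * g = (g⁻¹ * k * g)⁻¹ := by group
      rw [hg, inv_mem_iff]
    have hset : (QuotientGroup.mk ⁻¹' {x : G ⧸ H | ∀ k ∈ K, k • x = x} : Set G)
        = {g : G | ∀ k ∈ K, g⁻¹ * k * g ∈ H} := by
      ext g
      simp only [Set.mem_preimage, Set.mem_setOf_eq]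
      exact forall₂_congr fun k _ => hiff g k
    have e := QuotientGroup.preimageMkEquivSubgroupProdSet H {x : G ⧸ H | ∀ k ∈ K, k • x = x}
    have h1 : Nat.card (QuotientGroup.mk ⁻¹' {x : G ⧸ H | ∀ k ∈ K, k • x = x} : Set G)
        = Nat.card H * Nat.card {x : G ⧸ H // ∀ k ∈ K, k • x = x} := by
      rw [Nat.card_congr e, Nat.card_prod]
      rfl
    rw [hset] at h1
    have h2 : Nat.card {g : G | ∀ k ∈ K, g⁻¹ * k * g ∈ H}
        = ∑ g : G, (if ∀ k ∈ K, g⁻¹ * k * g ∈ H then 1 else 0) := by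
      rw [Nat.card_eq_fintype_card, Fintype.card_subtype]
      exact Finset.card_filter _ _
    rw [mul_comm]
    rw_mod_cast [← h1]
    exact_mod_cast h2
  -- Step 4: rewrite each term of the LHS.
  have hG0 : (Nat.card G : ℚ) ≠ 0 := by
    exact_mod_cast Nat.card_pos.ne'
  -- Step 4: rewrite each term of the LHS.
  have hterm : ∀ H : Subgroup G,
      (μ H : ℚ) / (H.index : ℚ) * (Nat.card {x : G ⧸ H // ∀ k ∈ K, k • x = x} : ℚ)
        = (μ H : ℚ) * (∑ g : G, (if ∀ k ∈ K, g⁻¹ * k * g ∈ H then (1 : ℚ) else 0))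
            / (Nat.card G : ℚ) := by
    intro H
    have hidx : (H.index : ℚ) * (Nat.card H : ℚ) = (Nat.card G : ℚ) := by
      exact_mod_cast H.index_mul_card
    have hidx0 : (H.index : ℚ) ≠ 0 := by
      exact_mod_cast H.index_ne_zero_of_finite
    have hH0 : (Nat.card H : ℚ) ≠ 0 := by
      exact_mod_cast Nat.card_pos.ne'
    rw [← count H, ← hidx]
    field_simp
  -- Step 5: put everything together.
  rw [finsum_eq_sum_of_fintype, key K]
  calc (∑ H : Subgroup G,
          (μ H : ℚ) / (H.index : ℚ) * (Nat.card {x : G ⧸ H // ∀ k ∈ K, k • x = x} : ℚ))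
      = ∑ H : Subgroup G, (μ H : ℚ)
          * (∑ g : G, (if ∀ k ∈ K, g⁻¹ * k * g ∈ H then (1 : ℚ) else 0)) / (Nat.card G : ℚ) :=
        Finset.sum_congr rfl fun H _ => hterm H
    _ = (∑ H : Subgroup G, ∑ g : G,
          (if ∀ k ∈ K, g⁻¹ * k * g ∈ H then (μ H : ℚ) else 0)) / (Nat.card G : ℚ) := by
        rw [← Finset.sum_div]
        congr 1
        refine Finset.sum_congr rfl fun H _ => ?_
        rw [Finset.mul_sum]
        exact Finset.sum_congr rfl fun g _ => by rw [mul_ite, mul_one, mul_zero]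
    _ = (∑ g : G, ∑ H : Subgroup G,
          (if ∀ k ∈ K, g⁻¹ * k * g ∈ H then (μ H : ℚ) else 0)) / (Nat.card G : ℚ) := by
        rw [Finset.sum_comm]
    _ = (∑ _g : G, if K = ⊤ then (1 : ℚ) else 0) / (Nat.card G : ℚ) := by
        rw [Finset.sum_congr rfl fun g _ => key'' g]
    _ = if K = ⊤ then 1 else 0 := by
        rw [Finset.sum_const, Finset.card_univ, nsmul_eq_mul, ← Nat.card_eq_fintype_card,
          mul_comm, mul_div_assoc, div_self hG0, mul_one]
end
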